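/- arXiv:1501.04079 — 5 statements merged into one kernel-verified Lean document; each statement's English description precedes it below -/
import Mathlib

section
/- Let Γ be a countable discrete group and (X,μ) a standard probability space. The convex combination operation on A_∼(Γ,X,μ) is jointly continuous: if t_j → t in [0,1] and a_j, b_j, a, b are measure-preserving actions of Γ on (X,μ) with d(a_j,a) → 0 and d(b_j,b) → 0, then d(t_j a_j + (1−t_j) b_j, t a + (1−t) b) → 0. Hence A_∼(Γ,X,μ) is a topological weak convex space. -/
open MeasureTheory Filter Topology Set

/-- A measure-preserving action of a group `Γ` on a measure space `(X, μ)`. -/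
structure MPAction (Γ : Type*) [Group Γ] (X : Type*) [MeasurableSpace X]
    (μ : MeasureTheory.Measure X) where
  act : Γ → X → X
  measurePreserving_act : ∀ γ : Γ, MeasureTheory.MeasurePreserving (act γ) μ μ
  act_one : ∀ x, act 1 x = x
  act_mul : ∀ γ δ x, act (γ * δ) x = act γ (act δ x)

namespace MPAction

variable {Γ : Type*} [Group Γ] {X : Type*} [MeasurableSpace X] {μ : Measure X}
  {Y : Type*} [MeasurableSpace Y] {ν : Measure Y}
  {W : Type*} [MeasurableSpace W] {ρ : Measure W}

/-- Weak containment of measure-preserving actions. -/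
def WeaklyContained (a : MPAction Γ X μ) (b : MPAction Γ Y ν) : Prop :=
  ∀ (n : ℕ) (A : Fin n → Set X), (∀ i, MeasurableSet (A i)) →
    ∀ (F : Finset Γ) (ε : ℝ), 0 < ε →
      ∃ B : Fin n → Set Y, (∀ i, MeasurableSet (B i)) ∧
        ∀ γ ∈ F, ∀ i j : Fin n,
          |(μ (a.act γ '' A i ∩ A j)).toReal - (ν (b.act γ '' B i ∩ B j)).toReal| < ε

/-- Weak equivalence of measure-preserving actions. -/
def WeakEquiv (a : MPAction Γ X μ) (b : MPAction Γ Y ν) : Prop :=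
  WeaklyContained a b ∧ WeaklyContained b a

/-- A finite measurable partition of the space. -/
def IsPartition {k : ℕ} (A : Fin k → Set X) : Prop :=
  (∀ i, MeasurableSet (A i)) ∧ Pairwise (Function.onFun Disjoint A) ∧ (⋃ i, A i) = Set.univ

/-- The compact set `C_{n,k}(a) ⊆ [0,1]^{n × k × k}`: the closure of the collection of
matrices of measures `μ(γ_p^a A_q ∩ A_r)` over all measurable `k`-partitions, with respect
to the fixed enumeration `e` of the group. -/
noncomputable def Cnk (e : ℕ → Γ) (a : MPAction Γ X μ) (n k : ℕ) :
    Set ((Fin n × Fin k × Fin k) → ℝ) :=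
  closure { v | ∃ A : Fin k → Set X, IsPartition A ∧
    ∀ (p : Fin n) (q r : Fin k), v (p, q, r) = (μ (a.act (e p.1) '' A q ∩ A r)).toReal }

/-- The metric `d` on weak equivalence classes:
`d(a,b) = Σ_{n,k} 2^{-(n+k)} d_H(C_{n,k}(a), C_{n,k}(b))`. -/
noncomputable def dWE (e : ℕ → Γ) (a : MPAction Γ X μ) (b : MPAction Γ Y ν) : ℝ :=
  ∑' nk : ℕ × ℕ, (2 : ℝ) ^ (-(nk.1 : ℤ) - (nk.2 : ℤ)) *
    Metric.hausdorffDist (Cnk e a nk.1 nk.2) (Cnk e b nk.1 nk.2)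

section Mix

variable {ι : Type*} {Z : ι → Type*} [∀ i, MeasurableSpace (Z i)]

theorem measurable_sigmaMk' (i : ι) : Measurable (@Sigma.mk ι Z i) :=
  measurable_iff_le_map.2 (iInf_le _ i)

theorem measurable_of_sigma {δ : Type*} [MeasurableSpace δ] {f : Sigma Z → δ}
    (hf : ∀ i, Measurable (f ∘ Sigma.mk i)) : Measurable f := by
  intro s hs
  rw [Sigma.instMeasurableSpace, MeasurableSpace.measurableSet_iInf]
  intro i
  exact hf i hs

/-- The measure `Σ_i λ_i ν_i` on the disjoint union `⊔_i Z_i`. -/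
noncomputable def mixMeasure (lam : ι → ℝ) (νs : ∀ i, Measure (Z i)) :
    Measure ((i : ι) × Z i) :=
  Measure.sum fun i => ENNReal.ofReal (lam i) • (νs i).map (Sigma.mk i)

instance mixMeasure.instSFinite [Countable ι] (lam : ι → ℝ) (νs : ∀ i, Measure (Z i))
    [∀ i, SFinite (νs i)] : SFinite (mixMeasure lam νs) := by
  unfold mixMeasure
  infer_instance

/-- The convex combination `Σ_i λ_i a_i` of measure-preserving actions, acting on the
disjoint union `⊔_i Z_i` with the measure `Σ_i λ_i ν_i`. -/
noncomputable def mix [Countable ι] {νs : ∀ i, Measure (Z i)} (lam : ι → ℝ)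
    (a : ∀ i, MPAction Γ (Z i) (νs i)) : MPAction Γ ((i : ι) × Z i) (mixMeasure lam νs) where
  act γ p := ⟨p.1, (a p.1).act γ p.2⟩
  measurePreserving_act γ := by
    have hmeas : Measurable fun p : (i : ι) × Z i => (⟨p.1, (a p.1).act γ p.2⟩ : (i : ι) × Z i) := by
      apply measurable_of_sigma
      intro i
      exact (measurable_sigmaMk' i).comp ((a i).measurePreserving_act γ).measurable
    refine ⟨hmeas, ?_⟩
    refine Measure.ext fun s hs => ?_
    rw [Measure.map_apply hmeas hs]
    rw [mixMeasure, Measure.sum_apply _ (hmeas hs), Measure.sum_apply _ hs]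
    congr 1
    funext i
    rw [Measure.smul_apply, Measure.smul_apply,
      Measure.map_apply (measurable_sigmaMk' i) (hmeas hs),
      Measure.map_apply (measurable_sigmaMk' i) hs]
    congr 1
    have hpre : (Sigma.mk i) ⁻¹'
        ((fun p : (i : ι) × Z i => (⟨p.1, (a p.1).act γ p.2⟩ : (i : ι) × Z i)) ⁻¹' s)
        = ((a i).act γ) ⁻¹' (Sigma.mk i ⁻¹' s) := rfl
    rw [hpre]
    exact ((a i).measurePreserving_act γ).measure_preimage
      ((measurable_sigmaMk' i) hs).nullMeasurableSet
  act_one p := by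
    cases p with
    | mk i x => simp only [(a i).act_one]
  act_mul γ δ p := by
    cases p with
    | mk i x => simp only [(a i).act_mul]

end Mix

/-- The binary convex combination `t a + (1 - t) b` of two actions on `(X, μ)`,
realized on the disjoint union of two copies of `X` carrying measures `tμ` and `(1-t)μ`. -/
noncomputable def convComb (t : ℝ) (a b : MPAction Γ X μ) :
    MPAction Γ ((_ : Fin 2) × X) (mixMeasure ![t, 1 - t] fun _ => μ) :=
  mix (νs := fun _ => μ) ![t, 1 - t] ![a, b]

/-- The trivial action. -/
def trivAction (Γ : Type*) [Group Γ] (Y : Type*) [MeasurableSpace Y] (ν : Measure Y) :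
    MPAction Γ Y ν where
  act _ y := y
  measurePreserving_act _ := MeasurePreserving.id ν
  act_one _ := rfl
  act_mul _ _ _ := rfl

/-- The product of two measure-preserving actions. -/
noncomputable def prodAction [SFinite μ] [SFinite ν] (a : MPAction Γ X μ) (b : MPAction Γ Y ν) :
    MPAction Γ (X × Y) (μ.prod ν) where
  act γ := Prod.map (a.act γ) (b.act γ)
  measurePreserving_act γ := (a.measurePreserving_act γ).prod (b.measurePreserving_act γ)
  act_one p := by simp [Prod.map, a.act_one, b.act_one]
  act_mul γ δ p := by simp [Prod.map, a.act_mul, b.act_mul]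

/-- Stable weak containment: `a ≺_s b` iff `a ≺ ι × b`, where `ι` is the trivial action of `Γ`
on the standard probability space `(X₀, μ₀)`. -/
def StableWeaklyContained {X₀ : Type*} [MeasurableSpace X₀] (μ₀ : Measure X₀) [SFinite μ₀]
    (a : MPAction Γ W ρ) (b : MPAction Γ Y ν) [SFinite ν] : Prop :=
  WeaklyContained a (prodAction (trivAction Γ X₀ μ₀) b)

/-- Stable weak equivalence. -/
def StableWeakEquiv {X₀ : Type*} [MeasurableSpace X₀] (μ₀ : Measure X₀) [SFinite μ₀]
    (a : MPAction Γ W ρ) [SFinite ρ] (b : MPAction Γ Y ν) [SFinite ν] : Prop :=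
  StableWeaklyContained μ₀ a b ∧ StableWeaklyContained μ₀ b a

/-- An action is ergodic if every strictly invariant measurable set is null or conull. -/
def IsErgodicAction (a : MPAction Γ X μ) : Prop :=
  ∀ A : Set X, MeasurableSet A → (∀ γ, a.act γ ⁻¹' A = A) → μ A = 0 ∨ μ Aᶜ = 0

/-- An action is (essentially) free if almost every point has trivial stabilizer. -/
def IsFreeAction (a : MPAction Γ X μ) : Prop :=
  ∀ᵐ x ∂μ, ∀ γ : Γ, γ ≠ 1 → a.act γ x ≠ x

end MPAction

section Aux

open MPAction Metric
open scoped ENNReal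

variable {Γ : Type*} [Group Γ] {X : Type*} [MeasurableSpace X] {μ : Measure X}
  {Y : Type*} [MeasurableSpace Y] {ν : Measure Y}
  {W : Type*} [MeasurableSpace W] {ρ : Measure W}

/-- The defining (pre-closure) set of `Cnk`. -/
def Snk (e : ℕ → Γ) (a : MPAction Γ X μ) (n k : ℕ) : Set ((Fin n × Fin k × Fin k) → ℝ) :=
  { v | ∃ A : Fin k → Set X, IsPartition A ∧
    ∀ (p : Fin n) (q r : Fin k), v (p, q, r) = (μ (a.act (e p.1) '' A q ∩ A r)).toReal }

lemma Cnk_eq_closure_Snk (e : ℕ → Γ) (a : MPAction Γ X μ) (n k : ℕ) :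
    Cnk e a n k = closure (Snk e a n k) := rfl

lemma nonempty_of_prob (ν : Measure Y) [IsProbabilityMeasure ν] : Nonempty Y := by
  by_contra h
  rw [not_nonempty_iff] at h
  have h0 : (Set.univ : Set Y) = ∅ := Set.univ_eq_empty_iff.mpr h
  have : ν Set.univ = 0 := by rw [h0]; exact measure_empty
  rw [measure_univ] at this
  exact one_ne_zero this

lemma image_act_eq_preimage (a : MPAction Γ X μ) (γ : Γ) (s : Set X) :
    a.act γ '' s = a.act γ⁻¹ ⁻¹' s := by
  ext x
  constructor
  · rintro ⟨y, hy, rfl⟩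
    have : a.act γ⁻¹ (a.act γ y) = y := by
      rw [← a.act_mul, inv_mul_cancel, a.act_one]
    simpa [Set.mem_preimage, this] using hy
  · intro hx
    refine ⟨a.act γ⁻¹ x, hx, ?_⟩
    rw [← a.act_mul, mul_inv_cancel, a.act_one]

lemma measurableSet_image_act (a : MPAction Γ X μ) (γ : Γ) {s : Set X}
    (hs : MeasurableSet s) : MeasurableSet (a.act γ '' s) := by
  rw [image_act_eq_preimage]
  exact (a.measurePreserving_act γ⁻¹).measurable hs

lemma measurableSet_of_sigma {ι : Type*} {Z : ι → Type*} [∀ i, MeasurableSpace (Z i)]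
    {s : Set ((i : ι) × Z i)} (h : ∀ i, MeasurableSet (Sigma.mk i ⁻¹' s)) :
    MeasurableSet s := by
  rw [Sigma.instMeasurableSpace, MeasurableSpace.measurableSet_iInf]
  intro i
  exact h i

/-- The inclusion of the `i`-th copy into the disjoint union of two copies of `X`. -/
abbrev mk2 {X : Type*} (i : Fin 2) (x : X) : (_ : Fin 2) × X := ⟨i, x⟩

lemma measurable_mk2 {X : Type*} [MeasurableSpace X] (i : Fin 2) :
    Measurable (mk2 (X := X) i) :=
  measurable_sigmaMk' i

lemma measurableSet_of_mk2 {X : Type*} [MeasurableSpace X] {s : Set ((_ : Fin 2) × X)}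
    (h0 : MeasurableSet (mk2 0 ⁻¹' s)) (h1 : MeasurableSet (mk2 1 ⁻¹' s)) :
    MeasurableSet s := by
  apply measurableSet_of_sigma (ι := Fin 2) (Z := fun _ => X)
  intro j
  fin_cases j
  · exact h0
  · exact h1

lemma mixMeasure_apply_toReal [IsProbabilityMeasure μ] {t : ℝ} (ht : t ∈ Set.Icc (0:ℝ) 1)
    {s : Set ((_ : Fin 2) × X)} (hs : MeasurableSet s) :
    ((mixMeasure ![t, 1-t] fun _ => μ) s).toReal
      = t * (μ (mk2 0 ⁻¹' s)).toReal + (1-t) * (μ (mk2 1 ⁻¹' s)).toReal := by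
  rw [mixMeasure, Measure.sum_apply _ hs, tsum_fintype]
  simp only [Fin.sum_univ_two, Measure.smul_apply, smul_eq_mul,
    Measure.map_apply (measurable_sigmaMk' _) hs,
    Matrix.cons_val_zero, Matrix.cons_val_one, Matrix.head_cons]
  rw [ENNReal.toReal_add (ENNReal.mul_ne_top ENNReal.ofReal_ne_top (measure_ne_top _ _))
      (ENNReal.mul_ne_top ENNReal.ofReal_ne_top (measure_ne_top _ _)),
    ENNReal.toReal_mul, ENNReal.toReal_mul,
    ENNReal.toReal_ofReal ht.1, ENNReal.toReal_ofReal (by linarith [ht.2])]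

lemma isProbabilityMeasure_mix [IsProbabilityMeasure μ] {t : ℝ} (ht : t ∈ Set.Icc (0:ℝ) 1) :
    IsProbabilityMeasure (mixMeasure ![t, 1-t] fun _ : Fin 2 => μ) := by
  constructor
  rw [mixMeasure, Measure.sum_apply _ MeasurableSet.univ, tsum_fintype]
  simp only [Fin.sum_univ_two, Measure.smul_apply, smul_eq_mul,
    Measure.map_apply (measurable_sigmaMk' _) MeasurableSet.univ, Set.preimage_univ,
    measure_univ, mul_one, Matrix.cons_val_zero, Matrix.cons_val_one, Matrix.head_cons]
  rw [← ENNReal.ofReal_add ht.1 (by linarith [ht.2])]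
  norm_num

lemma sigma_preimage_convComb_image [IsProbabilityMeasure μ] {t : ℝ}
    (a b : MPAction Γ X μ) (γ : Γ) (i : Fin 2) (s : Set ((_ : Fin 2) × X)) :
    mk2 i ⁻¹' ((convComb t a b).act γ '' s)
      = (![a, b] i).act γ '' (mk2 i ⁻¹' s) := by
  ext x
  constructor
  · rintro ⟨⟨j, y⟩, hy, heq⟩
    obtain ⟨rfl, h2⟩ := Sigma.mk.inj_iff.mp heq
    exact ⟨y, hy, eq_of_heq h2⟩
  · rintro ⟨y, hy, rfl⟩
    exact ⟨⟨i, y⟩, hy, rfl⟩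

/-- Combine two partitions of `X` into a partition of the disjoint union. -/
def pairPart {k : ℕ} (A B : Fin k → Set X) (i : Fin k) : Set ((_ : Fin 2) × X) :=
  {p | (p.1 = 0 ∧ p.2 ∈ A i) ∨ (p.1 = 1 ∧ p.2 ∈ B i)}

lemma pairPart_pre0 {k : ℕ} (A B : Fin k → Set X) (i : Fin k) :
    mk2 0 ⁻¹' pairPart A B i = A i := by
  ext x
  constructor
  · rintro (⟨-, h⟩ | ⟨h01, -⟩)
    · exact h
    · exact absurd (show (0 : Fin 2) = 1 from h01) (by decide)
  · intro h
    exact Or.inl ⟨rfl, h⟩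

lemma pairPart_pre1 {k : ℕ} (A B : Fin k → Set X) (i : Fin k) :
    mk2 1 ⁻¹' pairPart A B i = B i := by
  ext x
  constructor
  · rintro (⟨h01, -⟩ | ⟨-, h⟩)
    · exact absurd (show (1 : Fin 2) = 0 from h01) (by decide)
    · exact h
  · intro h
    exact Or.inr ⟨rfl, h⟩

lemma isPartition_pairPart {k : ℕ} {A B : Fin k → Set X}
    (hA : IsPartition A) (hB : IsPartition B) : IsPartition (pairPart A B) := by
  refine ⟨?_, ?_, ?_⟩
  · intro i
    apply measurableSet_of_mk2
    · rw [pairPart_pre0]; exact hA.1 i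
    · rw [pairPart_pre1]; exact hB.1 i
  · intro i j hij
    rw [Function.onFun, Set.disjoint_left]
    rintro ⟨f, x⟩ (⟨hf, hx⟩ | ⟨hf, hx⟩) (⟨hf', hx'⟩ | ⟨hf', hx'⟩)
    · exact Set.disjoint_left.mp (hA.2.1 hij) hx hx'
    · rw [hf] at hf'; exact absurd hf' (by decide)
    · rw [hf] at hf'; exact absurd hf' (by decide)
    · exact Set.disjoint_left.mp (hB.2.1 hij) hx hx'
  · ext ⟨f, x⟩
    simp only [Set.mem_iUnion, Set.mem_univ, iff_true]
    fin_cases f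
    · have hx : x ∈ ⋃ i, A i := hA.2.2 ▸ Set.mem_univ x
      rw [Set.mem_iUnion] at hx
      obtain ⟨i, hi⟩ := hx
      exact ⟨i, Or.inl ⟨rfl, hi⟩⟩
    · have hx : x ∈ ⋃ i, B i := hB.2.2 ▸ Set.mem_univ x
      rw [Set.mem_iUnion] at hx
      obtain ⟨i, hi⟩ := hx
      exact ⟨i, Or.inr ⟨rfl, hi⟩⟩

lemma isPartition_preimage_sigma {k : ℕ} (i : Fin 2)
    {C : Fin k → Set ((_ : Fin 2) × X)} (hC : IsPartition C) :
    IsPartition (fun q => mk2 i ⁻¹' C q) := by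
  refine ⟨fun q => measurable_mk2 i (hC.1 q),
    fun q r hqr => (hC.2.1 hqr).preimage _, ?_⟩
  rw [← Set.preimage_iUnion, hC.2.2, Set.preimage_univ]

set_option maxHeartbeats 1000000 in
lemma Snk_convComb [IsProbabilityMeasure μ] {t : ℝ} (ht : t ∈ Set.Icc (0:ℝ) 1)
    (a b : MPAction Γ X μ) (e : ℕ → Γ) (n k : ℕ) :
    Snk e (convComb t a b) n k
      = Set.image2 (fun v w => t • v + (1 - t) • w) (Snk e a n k) (Snk e b n k) := by
  ext u
  constructor
  · rintro ⟨C, hC, hu⟩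
    refine Set.mem_image2.mpr
      ⟨fun c => (μ (a.act (e c.1.1) '' (mk2 0 ⁻¹' C c.2.1) ∩ (mk2 0 ⁻¹' C c.2.2))).toReal,
        ⟨_, isPartition_preimage_sigma 0 hC, fun p q r => rfl⟩,
        fun c => (μ (b.act (e c.1.1) '' (mk2 1 ⁻¹' C c.2.1) ∩ (mk2 1 ⁻¹' C c.2.2))).toReal,
        ⟨_, isPartition_preimage_sigma 1 hC, fun p q r => rfl⟩, ?_⟩
    funext c
    obtain ⟨p, q, r⟩ := c
    rw [Pi.add_apply, Pi.smul_apply, Pi.smul_apply, smul_eq_mul, smul_eq_mul, hu p q r,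
      mixMeasure_apply_toReal ht
        ((measurableSet_image_act _ _ (hC.1 q)).inter (hC.1 r))]
    simp only [Set.preimage_inter, sigma_preimage_convComb_image,
      Matrix.cons_val_zero, Matrix.cons_val_one, Matrix.head_cons]
  · rintro ⟨va, ⟨A, hA, hva⟩, vb, ⟨B, hB, hvb⟩, rfl⟩
    refine ⟨pairPart A B, isPartition_pairPart hA hB, fun p q r => ?_⟩
    show (t • va + (1 - t) • vb) (p, q, r) = _
    rw [Pi.add_apply, Pi.smul_apply, Pi.smul_apply, smul_eq_mul, smul_eq_mul, hva p q r,
      hvb p q r,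
      mixMeasure_apply_toReal ht
        ((measurableSet_image_act _ _ ((isPartition_pairPart hA hB).1 q)).inter
          ((isPartition_pairPart hA hB).1 r))]
    simp only [Set.preimage_inter, sigma_preimage_convComb_image,
      Matrix.cons_val_zero, Matrix.cons_val_one, Matrix.head_cons,
      pairPart_pre0, pairPart_pre1]

lemma Snk_nonempty (e : ℕ → Γ) (a : MPAction Γ X μ) (n : ℕ) {k : ℕ} (hk : k ≠ 0) :
    (Snk e a n k).Nonempty := by
  haveI : NeZero k := ⟨hk⟩
  set A : Fin k → Set X := fun i => if i = 0 then Set.univ else ∅ with hAdef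
  have hA : IsPartition A := by
    refine ⟨?_, ?_, ?_⟩
    · intro i
      by_cases h : i = 0 <;> simp [hAdef, h]
    · intro i j hij
      rw [Function.onFun]
      by_cases hi : i = 0 <;> by_cases hj : j = 0
      · exact absurd (hi.trans hj.symm) hij
      all_goals simp [hAdef, hi, hj]
    · refine Set.eq_univ_iff_forall.mpr fun x => Set.mem_iUnion.mpr ⟨0, by simp [hAdef]⟩
  exact ⟨fun c => (μ (a.act (e c.1.1) '' A c.2.1 ∩ A c.2.2)).toReal,
    A, hA, fun p q r => rfl⟩

lemma Snk_subset_ball [IsProbabilityMeasure μ] (e : ℕ → Γ) (a : MPAction Γ X μ) (n k : ℕ) :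
    Snk e a n k ⊆ Metric.closedBall 0 1 := by
  rintro v ⟨A, hA, hv⟩
  rw [Metric.mem_closedBall, dist_zero_right, pi_norm_le_iff_of_nonneg zero_le_one]
  intro c
  obtain ⟨p, q, r⟩ := c
  rw [hv p q r, Real.norm_eq_abs, abs_of_nonneg ENNReal.toReal_nonneg]
  calc (μ (a.act (e p.1) '' A q ∩ A r)).toReal
      ≤ (1 : ℝ≥0∞).toReal := ENNReal.toReal_mono ENNReal.one_ne_top prob_le_one
    _ = 1 := ENNReal.toReal_one

lemma Snk_eq_empty (hY : Nonempty Y) (e : ℕ → Γ) (a : MPAction Γ Y ν) (n : ℕ) :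
    Snk e a n 0 = ∅ := by
  ext v
  simp only [Snk, Set.mem_setOf_eq, Set.mem_empty_iff_false, iff_false]
  rintro ⟨A, ⟨-, -, hU⟩, -⟩
  obtain ⟨y⟩ := hY
  have hy : y ∈ ⋃ i, A i := hU ▸ Set.mem_univ y
  rw [Set.mem_iUnion] at hy
  obtain ⟨i, -⟩ := hy
  exact i.elim0

lemma hd_combo_aux {E : Type*} [NormedAddCommGroup E] [NormedSpace ℝ E]
    {t t' : ℝ} (ht : t ∈ Set.Icc (0:ℝ) 1) (ht' : t' ∈ Set.Icc (0:ℝ) 1)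
    {Sa Sb Sa' Sb' : Set E}
    (hSa' : Sa'.Nonempty) (hSb' : Sb'.Nonempty)
    (bSa : Sa ⊆ Metric.closedBall 0 1) (bSb : Sb ⊆ Metric.closedBall 0 1)
    (bSa' : Sa' ⊆ Metric.closedBall 0 1) (bSb' : Sb' ⊆ Metric.closedBall 0 1)
    {ε : ℝ} (hε : 0 < ε) :
    ∀ x ∈ Set.image2 (fun v w => t • v + (1 - t) • w) Sa Sb,
      ∃ y ∈ Set.image2 (fun v w => t' • v + (1 - t') • w) Sa' Sb',
        dist x y ≤ hausdorffDist Sa Sa' + hausdorffDist Sb Sb' + 2 * |t - t'| + ε := by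
  rintro x ⟨v, hv, w, hw, rfl⟩
  have hSa : Sa.Nonempty := ⟨v, hv⟩
  have hSb : Sb.Nonempty := ⟨w, hw⟩
  have finA : EMetric.hausdorffEdist Sa Sa' ≠ ⊤ :=
    hausdorffEdist_ne_top_of_nonempty_of_bounded hSa hSa'
      (Metric.isBounded_closedBall.subset bSa) (Metric.isBounded_closedBall.subset bSa')
  have finB : EMetric.hausdorffEdist Sb Sb' ≠ ⊤ :=
    hausdorffEdist_ne_top_of_nonempty_of_bounded hSb hSb'
      (Metric.isBounded_closedBall.subset bSb) (Metric.isBounded_closedBall.subset bSb')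
  obtain ⟨v', hv', hdv⟩ := exists_dist_lt_of_hausdorffDist_lt hv
    (show hausdorffDist Sa Sa' < hausdorffDist Sa Sa' + ε / 2 by linarith) finA
  obtain ⟨w', hw', hdw⟩ := exists_dist_lt_of_hausdorffDist_lt hw
    (show hausdorffDist Sb Sb' < hausdorffDist Sb Sb' + ε / 2 by linarith) finB
  refine ⟨t' • v' + (1 - t') • w', Set.mem_image2_of_mem hv' hw', ?_⟩
  have hvn : ‖v‖ ≤ 1 := by
    have := bSa hv; rwa [Metric.mem_closedBall, dist_zero_right] at this
  have hwn : ‖w‖ ≤ 1 := by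
    have := bSb hw; rwa [Metric.mem_closedBall, dist_zero_right] at this
  rw [dist_eq_norm]
  have key : (t • v + (1 - t) • w) - (t' • v' + (1 - t') • w')
      = (t' • (v - v') + (t - t') • v) + ((1 - t') • (w - w') + (t' - t) • w) := by
    module
  rw [key]
  have h1 : ‖t' • (v - v')‖ ≤ hausdorffDist Sa Sa' + ε / 2 := by
    rw [norm_smul, Real.norm_eq_abs, abs_of_nonneg ht'.1, ← dist_eq_norm]
    nlinarith [dist_nonneg (x := v) (y := v'), ht'.2]
  have h2 : ‖(t - t') • v‖ ≤ |t - t'| := by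
    rw [norm_smul, Real.norm_eq_abs]
    nlinarith [abs_nonneg (t - t'), norm_nonneg v]
  have h3 : ‖(1 - t') • (w - w')‖ ≤ hausdorffDist Sb Sb' + ε / 2 := by
    rw [norm_smul, Real.norm_eq_abs, abs_of_nonneg (by linarith [ht'.2]),
      ← dist_eq_norm]
    nlinarith [dist_nonneg (x := w) (y := w'), ht'.1]
  have h4 : ‖(t' - t) • w‖ ≤ |t - t'| := by
    rw [norm_smul, Real.norm_eq_abs, abs_sub_comm]
    nlinarith [abs_nonneg (t - t'), norm_nonneg w]
  calc ‖(t' • (v - v') + (t - t') • v) + ((1 - t') • (w - w') + (t' - t) • w)‖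
      ≤ ‖t' • (v - v') + (t - t') • v‖ + ‖(1 - t') • (w - w') + (t' - t) • w‖ :=
        norm_add_le _ _
    _ ≤ (‖t' • (v - v')‖ + ‖(t - t') • v‖) + (‖(1 - t') • (w - w')‖ + ‖(t' - t) • w‖) :=
        add_le_add (norm_add_le _ _) (norm_add_le _ _)
    _ ≤ hausdorffDist Sa Sa' + hausdorffDist Sb Sb' + 2 * |t - t'| + ε := by
        linarith

lemma hd_image2_le {E : Type*} [NormedAddCommGroup E] [NormedSpace ℝ E]
    {t t' : ℝ} (ht : t ∈ Set.Icc (0:ℝ) 1) (ht' : t' ∈ Set.Icc (0:ℝ) 1)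
    {Sa Sb Sa' Sb' : Set E}
    (hSa : Sa.Nonempty) (hSb : Sb.Nonempty) (hSa' : Sa'.Nonempty) (hSb' : Sb'.Nonempty)
    (bSa : Sa ⊆ Metric.closedBall 0 1) (bSb : Sb ⊆ Metric.closedBall 0 1)
    (bSa' : Sa' ⊆ Metric.closedBall 0 1) (bSb' : Sb' ⊆ Metric.closedBall 0 1) :
    hausdorffDist (Set.image2 (fun v w => t • v + (1 - t) • w) Sa Sb)
        (Set.image2 (fun v w => t' • v + (1 - t') • w) Sa' Sb')
      ≤ hausdorffDist Sa Sa' + hausdorffDist Sb Sb' + 2 * |t - t'| := by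
  refine le_of_forall_pos_le_add fun ε hε => ?_
  refine hausdorffDist_le_of_mem_dist
    (by have h1 := hausdorffDist_nonneg (s := Sa) (t := Sa')
        have h2 := hausdorffDist_nonneg (s := Sb) (t := Sb')
        have h3 := abs_nonneg (t - t')
        linarith) ?_ ?_
  · exact hd_combo_aux ht ht' hSa' hSb' bSa bSb bSa' bSb' hε
  · intro y hy
    obtain ⟨x, hx, hxy⟩ := hd_combo_aux ht' ht hSa hSb bSa' bSb' bSa bSb hε y hy
    refine ⟨x, hx, ?_⟩
    calc dist y x ≤ hausdorffDist Sa' Sa + hausdorffDist Sb' Sb + 2 * |t' - t| + ε := hxy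
      _ = hausdorffDist Sa Sa' + hausdorffDist Sb Sb' + 2 * |t - t'| + ε := by
          rw [hausdorffDist_comm (s := Sa'), hausdorffDist_comm (s := Sb'), abs_sub_comm]

set_option maxHeartbeats 1000000 in
lemma hd_Cnk_convComb [IsProbabilityMeasure μ] {t t' : ℝ}
    (ht : t ∈ Set.Icc (0:ℝ) 1) (ht' : t' ∈ Set.Icc (0:ℝ) 1)
    (a b a' b' : MPAction Γ X μ) (e : ℕ → Γ) (n k : ℕ) :
    hausdorffDist (Cnk e (convComb t a b) n k) (Cnk e (convComb t' a' b') n k)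
      ≤ hausdorffDist (Cnk e a n k) (Cnk e a' n k)
        + hausdorffDist (Cnk e b n k) (Cnk e b' n k) + 2 * |t - t'| := by
  have hX : Nonempty X := nonempty_of_prob μ
  rcases eq_or_ne k 0 with rfl | hk
  · have hT : Nonempty ((_ : Fin 2) × X) := ⟨⟨0, Classical.choice hX⟩⟩
    rw [Cnk_eq_closure_Snk, Snk_eq_empty hT, closure_empty, hausdorffDist_empty']
    have h1 := hausdorffDist_nonneg (s := Cnk e a n 0) (t := Cnk e a' n 0)
    have h2 := hausdorffDist_nonneg (s := Cnk e b n 0) (t := Cnk e b' n 0)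
    have h3 := abs_nonneg (t - t')
    linarith
  · rw [Cnk_eq_closure_Snk, Cnk_eq_closure_Snk, Cnk_eq_closure_Snk, Cnk_eq_closure_Snk,
      Cnk_eq_closure_Snk, Cnk_eq_closure_Snk, hausdorffDist_closure, hausdorffDist_closure,
      hausdorffDist_closure, Snk_convComb ht, Snk_convComb ht']
    exact hd_image2_le ht ht' (Snk_nonempty e a n hk) (Snk_nonempty e b n hk)
      (Snk_nonempty e a' n hk) (Snk_nonempty e b' n hk)
      (Snk_subset_ball e a n k) (Snk_subset_ball e b n k)
      (Snk_subset_ball e a' n k) (Snk_subset_ball e b' n k)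

lemma hd_Cnk_le_two [IsProbabilityMeasure ν] [IsProbabilityMeasure ρ]
    (a : MPAction Γ Y ν) (b : MPAction Γ W ρ) (e : ℕ → Γ) (n k : ℕ) :
    hausdorffDist (Cnk e a n k) (Cnk e b n k) ≤ 2 := by
  rcases eq_or_ne k 0 with rfl | hk
  · rw [Cnk_eq_closure_Snk, Snk_eq_empty (nonempty_of_prob ν), closure_empty,
      hausdorffDist_empty']
    norm_num
  · rw [Cnk_eq_closure_Snk, Cnk_eq_closure_Snk, hausdorffDist_closure]
    refine hausdorffDist_le_of_mem_dist (by norm_num) ?_ ?_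
    · intro x hx
      obtain ⟨y, hy⟩ := Snk_nonempty e b n hk
      refine ⟨y, hy, ?_⟩
      have h1 := Snk_subset_ball e a n k hx
      have h2 := Snk_subset_ball e b n k hy
      rw [Metric.mem_closedBall] at h1 h2
      calc dist x y ≤ dist x 0 + dist 0 y := dist_triangle _ _ _
        _ ≤ 2 := by rw [dist_comm (0 : _) y]; linarith
    · intro y hy
      obtain ⟨x, hx⟩ := Snk_nonempty e a n hk
      refine ⟨x, hx, ?_⟩
      have h1 := Snk_subset_ball e a n k hx
      have h2 := Snk_subset_ball e b n k hy
      rw [Metric.mem_closedBall] at h1 h2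
      calc dist y x ≤ dist y 0 + dist 0 x := dist_triangle _ _ _
        _ ≤ 2 := by rw [dist_comm (0 : _) x]; linarith

lemma base_eq (nk : ℕ × ℕ) :
    (2 : ℝ) ^ (-(nk.1 : ℤ) - (nk.2 : ℤ)) = (1/2 : ℝ) ^ nk.1 * (1/2 : ℝ) ^ nk.2 := by
  rw [show -(nk.1 : ℤ) - (nk.2 : ℤ) = -((nk.1 + nk.2 : ℕ) : ℤ) by push_cast; ring,
    zpow_neg, zpow_natCast, pow_add]
  rw [mul_inv]
  simp [one_div, inv_pow]

lemma base_summable' : Summable (fun nk : ℕ × ℕ => (1/2 : ℝ) ^ nk.1 * (1/2 : ℝ) ^ nk.2) :=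
  summable_geometric_two.mul_of_nonneg summable_geometric_two
    (fun n => by positivity) (fun n => by positivity)

lemma base_summable : Summable (fun nk : ℕ × ℕ => (2 : ℝ) ^ (-(nk.1 : ℤ) - (nk.2 : ℤ))) :=
  base_summable'.congr (fun nk => (base_eq nk).symm)

lemma base_tsum : ∑' nk : ℕ × ℕ, (2 : ℝ) ^ (-(nk.1 : ℤ) - (nk.2 : ℤ)) = 4 := by
  calc ∑' nk : ℕ × ℕ, (2 : ℝ) ^ (-(nk.1 : ℤ) - (nk.2 : ℤ))
      = ∑' nk : ℕ × ℕ, (1/2 : ℝ) ^ nk.1 * (1/2 : ℝ) ^ nk.2 := tsum_congr base_eq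
    _ = ∑' n : ℕ, ∑' k : ℕ, (1/2 : ℝ) ^ n * (1/2 : ℝ) ^ k :=
        Summable.tsum_prod' base_summable' (fun n => summable_geometric_two.mul_left ((1/2:ℝ)^n))
    _ = 4 := by
        simp_rw [tsum_mul_left, tsum_geometric_two]
        rw [tsum_mul_right, tsum_geometric_two]
        norm_num

lemma dWE_summand_summable [IsProbabilityMeasure ν] [IsProbabilityMeasure ρ]
    (a : MPAction Γ Y ν) (b : MPAction Γ W ρ) (e : ℕ → Γ) :
    Summable (fun nk : ℕ × ℕ => (2 : ℝ) ^ (-(nk.1 : ℤ) - (nk.2 : ℤ)) *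
      hausdorffDist (Cnk e a nk.1 nk.2) (Cnk e b nk.1 nk.2)) := by
  refine Summable.of_nonneg_of_le
    (fun nk => mul_nonneg (by positivity) hausdorffDist_nonneg)
    (fun nk => mul_le_mul_of_nonneg_left (hd_Cnk_le_two a b e nk.1 nk.2) (by positivity))
    (base_summable.mul_right 2)

lemma dWE_nonneg (a : MPAction Γ Y ν) (b : MPAction Γ W ρ) (e : ℕ → Γ) :
    0 ≤ dWE e a b :=
  tsum_nonneg fun nk => mul_nonneg (by positivity) hausdorffDist_nonneg

set_option maxHeartbeats 1000000 in
lemma dWE_convComb_le [IsProbabilityMeasure μ] {t t' : ℝ}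
    (ht : t ∈ Set.Icc (0:ℝ) 1) (ht' : t' ∈ Set.Icc (0:ℝ) 1)
    (a b a' b' : MPAction Γ X μ) (e : ℕ → Γ) :
    dWE e (convComb t a b) (convComb t' a' b')
      ≤ dWE e a a' + dWE e b b' + 8 * |t - t'| := by
  haveI h1 : IsProbabilityMeasure (mixMeasure ![t, 1-t] fun _ : Fin 2 => μ) :=
    isProbabilityMeasure_mix ht
  haveI h2 : IsProbabilityMeasure (mixMeasure ![t', 1-t'] fun _ : Fin 2 => μ) :=
    isProbabilityMeasure_mix ht'
  have hterm : ∀ nk : ℕ × ℕ,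
      (2 : ℝ) ^ (-(nk.1 : ℤ) - (nk.2 : ℤ)) *
          hausdorffDist (Cnk e (convComb t a b) nk.1 nk.2)
            (Cnk e (convComb t' a' b') nk.1 nk.2)
        ≤ ((2 : ℝ) ^ (-(nk.1 : ℤ) - (nk.2 : ℤ)) *
              hausdorffDist (Cnk e a nk.1 nk.2) (Cnk e a' nk.1 nk.2)
            + (2 : ℝ) ^ (-(nk.1 : ℤ) - (nk.2 : ℤ)) *
              hausdorffDist (Cnk e b nk.1 nk.2) (Cnk e b' nk.1 nk.2))
          + (2 : ℝ) ^ (-(nk.1 : ℤ) - (nk.2 : ℤ)) * (2 * |t - t'|) := by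
    intro nk
    have hb := hd_Cnk_convComb ht ht' a b a' b' e nk.1 nk.2
    have hpos : (0:ℝ) < (2 : ℝ) ^ (-(nk.1 : ℤ) - (nk.2 : ℤ)) := by positivity
    nlinarith [hb, hpos]
  have sA := dWE_summand_summable a a' e
  have sB := dWE_summand_summable b b' e
  have sC : Summable (fun nk : ℕ × ℕ =>
      (2 : ℝ) ^ (-(nk.1 : ℤ) - (nk.2 : ℤ)) * (2 * |t - t'|)) :=
    base_summable.mul_right _
  calc dWE e (convComb t a b) (convComb t' a' b')
      ≤ ∑' nk : ℕ × ℕ,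
          (((2 : ℝ) ^ (-(nk.1 : ℤ) - (nk.2 : ℤ)) *
              hausdorffDist (Cnk e a nk.1 nk.2) (Cnk e a' nk.1 nk.2)
            + (2 : ℝ) ^ (-(nk.1 : ℤ) - (nk.2 : ℤ)) *
              hausdorffDist (Cnk e b nk.1 nk.2) (Cnk e b' nk.1 nk.2))
          + (2 : ℝ) ^ (-(nk.1 : ℤ) - (nk.2 : ℤ)) * (2 * |t - t'|)) := by
        refine Summable.tsum_le_tsum hterm (dWE_summand_summable _ _ e) ((sA.add sB).add sC)
    _ = (∑' nk : ℕ × ℕ, (2 : ℝ) ^ (-(nk.1 : ℤ) - (nk.2 : ℤ)) *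
            hausdorffDist (Cnk e a nk.1 nk.2) (Cnk e a' nk.1 nk.2)
          + ∑' nk : ℕ × ℕ, (2 : ℝ) ^ (-(nk.1 : ℤ) - (nk.2 : ℤ)) *
            hausdorffDist (Cnk e b nk.1 nk.2) (Cnk e b' nk.1 nk.2))
        + (∑' nk : ℕ × ℕ, (2 : ℝ) ^ (-(nk.1 : ℤ) - (nk.2 : ℤ))) * (2 * |t - t'|) := by
        rw [Summable.tsum_add (sA.add sB) sC, Summable.tsum_add sA sB, tsum_mul_right]
    _ = dWE e a a' + dWE e b b' + 8 * |t - t'| := by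
        rw [base_tsum, dWE, dWE]
        ring

end Aux

/-- The convex combination operation on `A_∼(Γ,X,μ)` is jointly continuous:
if `t_j → t` in `[0,1]`, `d(a_j,a) → 0` and `d(b_j,b) → 0`, then
`d(t_j a_j + (1−t_j) b_j, t a + (1−t) b) → 0`.  Hence `A_∼(Γ,X,μ)` is a topological weak
convex space. -/
theorem convComb_continuous
    (Γ : Type) [Group Γ] [Countable Γ]
    (X : Type) [MeasurableSpace X] [StandardBorelSpace X]
    (μ : Measure X) [IsProbabilityMeasure μ] [NullSingletonClass μ]
    (e : ℕ → Γ) (he : Function.Surjective e)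
    (t : ℕ → ℝ) (t₀ : ℝ) (htmem : ∀ j, t j ∈ Set.Icc (0:ℝ) 1) (ht₀ : t₀ ∈ Set.Icc (0:ℝ) 1)
    (htlim : Filter.Tendsto t Filter.atTop (nhds t₀))
    (a : ℕ → MPAction Γ X μ) (a₀ : MPAction Γ X μ)
    (ha : Filter.Tendsto (fun j => MPAction.dWE e (a j) a₀) Filter.atTop (nhds 0))
    (b : ℕ → MPAction Γ X μ) (b₀ : MPAction Γ X μ)
    (hb : Filter.Tendsto (fun j => MPAction.dWE e (b j) b₀) Filter.atTop (nhds 0)) :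
    Filter.Tendsto
      (fun j => MPAction.dWE e (MPAction.convComb (t j) (a j) (b j))
        (MPAction.convComb t₀ a₀ b₀)) Filter.atTop (nhds 0) := by
  have hbound : ∀ j,
      MPAction.dWE e (MPAction.convComb (t j) (a j) (b j)) (MPAction.convComb t₀ a₀ b₀)
        ≤ MPAction.dWE e (a j) a₀ + MPAction.dWE e (b j) b₀ + 8 * |t j - t₀| :=
    fun j => dWE_convComb_le (htmem j) ht₀ (a j) (b j) a₀ b₀ e
  have hnonneg : ∀ j, 0 ≤
      MPAction.dWE e (MPAction.convComb (t j) (a j) (b j)) (MPAction.convComb t₀ a₀ b₀) :=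
    fun j => dWE_nonneg _ _ e
  have h3 : Filter.Tendsto (fun j => 8 * |t j - t₀|) Filter.atTop (nhds 0) := by
    have h := ((htlim.sub (tendsto_const_nhds (x := t₀))).abs).const_mul (8:ℝ)
    simpa using h
  have hG : Filter.Tendsto
      (fun j => MPAction.dWE e (a j) a₀ + MPAction.dWE e (b j) b₀ + 8 * |t j - t₀|)
      Filter.atTop (nhds 0) := by
    have := (ha.add hb).add h3
    simpa using this
  exact squeeze_zero hnonneg hbound hG
end

section
/- Let Γ be a countable discrete group and (X,μ) a standard probability space. For any convex subset K of A_∼(Γ,X,μ), the function x ↦ d(x,K) = inf_{b∈K} d(x,b) is convex: for all measure-preserving actions x, y of Γ on (X,μ) and all t ∈ [0,1], d(t x + (1−t) y, K) ≤ t·d(x,K) + (1−t)·d(y,K). In particular, for all actions x, y, c, e and t ∈ [0,1] one has d_H(C_{n,k}(t x + (1−t) y), C_{n,k}(t c + (1−t) e)) ≤ t·d_H(C_{n,k}(x),C_{n,k}(c)) + (1−t)·d_H(C_{n,k}(y),C_{n,k}(e)) for every n,k. -/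
open MeasureTheory Filter Topology Set

namespace MPAction

variable {Γ : Type*} [Group Γ] {X : Type*} [MeasurableSpace X] {μ : Measure X}
  {Y : Type*} [MeasurableSpace Y] {ν : Measure Y}

theorem act_image_eq_preimage (a : MPAction Γ X μ) (γ : Γ) (S : Set X) :
    a.act γ '' S = a.act γ⁻¹ ⁻¹' S := by
  ext x
  constructor
  · rintro ⟨y, hy, rfl⟩
    simpa [Set.mem_preimage, ← a.act_mul, a.act_one] using hy
  · intro hx
    exact ⟨a.act γ⁻¹ x, hx, by simp [← a.act_mul, a.act_one]⟩

theorem act_image_measurableSet (a : MPAction Γ X μ) (γ : Γ) {S : Set X}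
    (hS : MeasurableSet S) : MeasurableSet (a.act γ '' S) := by
  rw [act_image_eq_preimage]
  exact (a.measurePreserving_act γ⁻¹).measurable hS

theorem measure_act_image (a : MPAction Γ X μ) (γ : Γ) {S : Set X}
    (hS : MeasurableSet S) : μ (a.act γ '' S) = μ S := by
  rw [act_image_eq_preimage]
  exact (a.measurePreserving_act γ⁻¹).measure_preimage hS.nullMeasurableSet

/-- The pre-closure set whose closure is `Cnk`. -/
def Pre (e : ℕ → Γ) (a : MPAction Γ X μ) (n k : ℕ) : Set ((Fin n × Fin k × Fin k) → ℝ) :=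
  { v | ∃ A : Fin k → Set X, IsPartition A ∧
    ∀ (p : Fin n) (q r : Fin k), v (p, q, r) = (μ (a.act (e p.1) '' A q ∩ A r)).toReal }

theorem Cnk_eq_closure_Pre (e : ℕ → Γ) (a : MPAction Γ X μ) (n k : ℕ) :
    Cnk e a n k = closure (Pre e a n k) := rfl

end MPAction
namespace MPAction

variable {Γ : Type*} [Group Γ] {X : Type*} [MeasurableSpace X] {μ : Measure X}

/-- Inclusion of the `i`-th copy into the disjoint union of two copies of `X`. -/
abbrev ink (X : Type*) (i : Fin 2) : X → (_ : Fin 2) × X := @Sigma.mk (Fin 2) (fun _ => X) i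

theorem mixMeasure_apply₂ (t : ℝ) {S : Set ((_ : Fin 2) × X)} (hS : MeasurableSet S) :
    mixMeasure ![t, 1 - t] (fun _ => μ) S =
      ENNReal.ofReal t * μ (ink X 0 ⁻¹' S) + ENNReal.ofReal (1 - t) * μ (ink X 1 ⁻¹' S) := by
  rw [mixMeasure, Measure.sum_apply _ hS, tsum_fintype, Fin.sum_univ_two]
  simp only [Measure.smul_apply, Measure.map_apply (measurable_sigmaMk' _) hS,
    Matrix.cons_val_zero, Matrix.cons_val_one, Matrix.head_cons, smul_eq_mul]


theorem isProb_mixMeasure₂ {t : ℝ} (ht : t ∈ Set.Icc (0:ℝ) 1) [IsProbabilityMeasure μ] :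
    IsProbabilityMeasure (mixMeasure ![t, 1 - t] (fun _ => μ)) := by
  constructor
  rw [mixMeasure_apply₂ t MeasurableSet.univ]
  simp only [Set.preimage_univ, measure_univ, mul_one]
  rw [← ENNReal.ofReal_add ht.1 (by linarith [ht.2])]
  norm_num

theorem ink_preimage_convComb_act (t : ℝ) (x y : MPAction Γ X μ) (γ : Γ)
    (S : Set ((_ : Fin 2) × X)) :
    (ink X 0 ⁻¹' ((convComb t x y).act γ '' S) = x.act γ '' (ink X 0 ⁻¹' S)) ∧
    (ink X 1 ⁻¹' ((convComb t x y).act γ '' S) = y.act γ '' (ink X 1 ⁻¹' S)) := by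
  rw [act_image_eq_preimage, act_image_eq_preimage, act_image_eq_preimage]
  exact ⟨rfl, rfl⟩

end MPAction
namespace MPAction

variable {Γ : Type*} [Group Γ] {X : Type*} [MeasurableSpace X] {μ : Measure X}

theorem measurableSet_sigma_iff' {ι : Type*} {Z : ι → Type*} [∀ i, MeasurableSpace (Z i)]
    {s : Set ((i : ι) × Z i)} :
    MeasurableSet s ↔ ∀ i, MeasurableSet (Sigma.mk i ⁻¹' s) := by
  rw [Sigma.instMeasurableSpace, MeasurableSpace.measurableSet_iInf]
  rfl

/-- The convex combination map on matrices. -/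
def cmb (t : ℝ) {n k : ℕ} (v w : (Fin n × Fin k × Fin k) → ℝ) : (Fin n × Fin k × Fin k) → ℝ :=
  fun i => t * v i + (1 - t) * w i

theorem Pre_convComb [IsProbabilityMeasure μ] (e : ℕ → Γ) {t : ℝ} (ht : t ∈ Set.Icc (0:ℝ) 1)
    (x y : MPAction Γ X μ) (n k : ℕ) :
    Pre e (convComb t x y) n k = Set.image2 (cmb t) (Pre e x n k) (Pre e y n k) := by
  have h1t : (0:ℝ) ≤ 1 - t := by linarith [ht.2]
  ext v
  constructor
  · rintro ⟨C, ⟨hCm, hCd, hCu⟩, hv⟩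
    set A : Fin k → Set X := fun i => ink X 0 ⁻¹' C i with hA
    set B : Fin k → Set X := fun i => ink X 1 ⁻¹' C i with hB
    refine ⟨fun i => (μ (x.act (e i.1.1) '' A i.2.1 ∩ A i.2.2)).toReal,
      ⟨A, ⟨fun i => (measurable_sigmaMk' 0) (hCm i),
        fun i j hij => (hCd hij).preimage _,
        by rw [← Set.preimage_iUnion, hCu, Set.preimage_univ]⟩, fun p q r => rfl⟩,
      fun i => (μ (y.act (e i.1.1) '' B i.2.1 ∩ B i.2.2)).toReal,
      ⟨B, ⟨fun i => (measurable_sigmaMk' 1) (hCm i),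
        fun i j hij => (hCd hij).preimage _,
        by rw [← Set.preimage_iUnion, hCu, Set.preimage_univ]⟩, fun p q r => rfl⟩, ?_⟩
    funext i
    obtain ⟨p, q, r⟩ := i
    rw [cmb, hv p q r]
    have hSm : MeasurableSet ((convComb t x y).act (e p.1) '' C q ∩ C r) :=
      (act_image_measurableSet _ _ (hCm q)).inter (hCm r)
    rw [mixMeasure_apply₂ t hSm, Set.preimage_inter, Set.preimage_inter,
      (ink_preimage_convComb_act t x y (e p.1) (C q)).1,
      (ink_preimage_convComb_act t x y (e p.1) (C q)).2]
    rw [ENNReal.toReal_add (by finiteness) (by finiteness), ENNReal.toReal_mul,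
      ENNReal.toReal_mul, ENNReal.toReal_ofReal ht.1, ENNReal.toReal_ofReal h1t]
  · rintro ⟨vx, ⟨A, ⟨hAm, hAd, hAu⟩, hvx⟩, vy, ⟨B, ⟨hBm, hBd, hBu⟩, hvy⟩, rfl⟩
    set C : Fin k → Set ((_ : Fin 2) × X) := fun i => ink X 0 '' A i ∪ ink X 1 '' B i with hC
    have hpre0 : ∀ i, ink X 0 ⁻¹' C i = A i := by
      intro i
      rw [hC]
      simp only [Set.preimage_union, sigma_mk_preimage_image_eq_self,
        sigma_mk_preimage_image' (show (1 : Fin 2) ≠ 0 by decide), Set.union_empty]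
    have hpre1 : ∀ i, ink X 1 ⁻¹' C i = B i := by
      intro i
      rw [hC]
      simp only [Set.preimage_union, sigma_mk_preimage_image_eq_self,
        sigma_mk_preimage_image' (show (0 : Fin 2) ≠ 1 by decide), Set.empty_union]
    have hpre : ∀ (i : Fin 2) (q : Fin k), ink X i ⁻¹' C q = if i = 0 then A q else B q := by
      intro i q
      fin_cases i
      · simpa using hpre0 q
      · simpa using hpre1 q
    refine ⟨C, ⟨?_, ?_, ?_⟩, ?_⟩
    · intro i
      rw [measurableSet_sigma_iff']
      intro j
      rw [hpre j i]
      split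
      · exact hAm i
      · exact hBm i
    · intro i j hij
      simp only [Function.onFun]
      rw [Set.disjoint_left]
      rintro ⟨l, z⟩ hzi hzj
      have h1 : z ∈ ink X l ⁻¹' C i := hzi
      have h2 : z ∈ ink X l ⁻¹' C j := hzj
      rw [hpre l i] at h1
      rw [hpre l j] at h2
      split at h1 <;> split at h2 <;> first
        | exact Set.disjoint_left.1 (hAd hij) h1 h2
        | exact Set.disjoint_left.1 (hBd hij) h1 h2
        | simp_all
    · ext ⟨l, z⟩
      simp only [Set.mem_iUnion, Set.mem_univ, iff_true]
      have : ∀ q : Fin k, (⟨l, z⟩ : (_ : Fin 2) × X) ∈ C q ↔ z ∈ ink X l ⁻¹' C q :=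
        fun q => Iff.rfl
      by_cases hl : l = 0
      · subst hl
        have hz : z ∈ ⋃ q, A q := by rw [hAu]; trivial
        obtain ⟨q, hq⟩ := Set.mem_iUnion.1 hz
        exact ⟨q, by rw [this q, hpre0 q]; exact hq⟩
      · have hl1 : l = 1 := by omega
        subst hl1
        have hz : z ∈ ⋃ q, B q := by rw [hBu]; trivial
        obtain ⟨q, hq⟩ := Set.mem_iUnion.1 hz
        exact ⟨q, by rw [this q, hpre1 q]; exact hq⟩
    · intro p q r
      have hSm : MeasurableSet ((convComb t x y).act (e p.1) '' C q ∩ C r) := by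
        refine (act_image_measurableSet _ _ ?_).inter ?_
        · rw [measurableSet_sigma_iff']
          intro j; rw [hpre j q]; split
          · exact hAm q
          · exact hBm q
        · rw [measurableSet_sigma_iff']
          intro j; rw [hpre j r]; split
          · exact hAm r
          · exact hBm r
      rw [cmb, hvx p q r, hvy p q r, mixMeasure_apply₂ t hSm, Set.preimage_inter,
        Set.preimage_inter, (ink_preimage_convComb_act t x y (e p.1) (C q)).1,
        (ink_preimage_convComb_act t x y (e p.1) (C q)).2, hpre0, hpre1, hpre0, hpre1,
        ENNReal.toReal_add (by finiteness) (by finiteness), ENNReal.toReal_mul,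
        ENNReal.toReal_mul, ENNReal.toReal_ofReal ht.1, ENNReal.toReal_ofReal h1t]

end MPAction
namespace MPAction

variable {Γ : Type*} [Group Γ] {X : Type*} [MeasurableSpace X] {μ : Measure X}

theorem Pre_subset_closedBall [IsProbabilityMeasure μ] (e : ℕ → Γ) (a : MPAction Γ X μ)
    (n k : ℕ) : Pre e a n k ⊆ Metric.closedBall 0 1 := by
  rintro v ⟨A, _, hv⟩
  rw [Metric.mem_closedBall, dist_pi_le_iff zero_le_one]
  rintro ⟨p, q, r⟩
  rw [hv p q r]
  have h1 : (μ (a.act (e p.1) '' A q ∩ A r)).toReal ≤ 1 := by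
    rw [show (1:ℝ) = (μ Set.univ).toReal by simp]
    exact ENNReal.toReal_mono (measure_ne_top _ _) (measure_mono (Set.subset_univ _))
  have h0 : 0 ≤ (μ (a.act (e p.1) '' A q ∩ A r)).toReal := ENNReal.toReal_nonneg
  rw [Real.dist_eq]
  simp only [Pi.zero_apply, sub_zero]
  rw [abs_of_nonneg h0]
  exact h1

theorem Pre_nonempty [IsProbabilityMeasure μ] (e : ℕ → Γ) (a : MPAction Γ X μ)
    (n : ℕ) {k : ℕ} (hk : 0 < k) : (Pre e a n k).Nonempty := by
  set z : Fin k := ⟨0, hk⟩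
  set A : Fin k → Set X := fun i => if i = z then Set.univ else ∅ with hA
  have hP : IsPartition A := by
    refine ⟨fun i => by by_cases h : i = z <;> simp [hA, h], ?_, ?_⟩
    · intro i j hij
      simp only [Function.onFun, hA]
      split <;> split <;> simp_all
    · apply Set.eq_univ_of_univ_subset
      intro x _
      exact Set.mem_iUnion.2 ⟨z, by simp [hA]⟩
  exact ⟨fun i => (μ (a.act (e i.1.1) '' A i.2.1 ∩ A i.2.2)).toReal, A, hP, fun p q r => rfl⟩

theorem Pre_eq_empty_of_zero [IsProbabilityMeasure μ] (e : ℕ → Γ) (a : MPAction Γ X μ)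
    (n : ℕ) : Pre e a n 0 = ∅ := by
  rw [Set.eq_empty_iff_forall_notMem]
  rintro v ⟨A, ⟨_, _, hAu⟩, _⟩
  have h1 : μ (⋃ i, A i) = 1 := by rw [hAu]; simp
  rw [Set.iUnion_of_empty] at h1
  simp at h1

theorem dist_cmb_le {n k : ℕ} {t : ℝ} (ht : t ∈ Set.Icc (0:ℝ) 1)
    (v w v' w' : (Fin n × Fin k × Fin k) → ℝ) :
    dist (cmb t v w) (cmb t v' w') ≤ t * dist v v' + (1 - t) * dist w w' := by
  have h1t : (0:ℝ) ≤ 1 - t := by linarith [ht.2]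
  rw [dist_pi_le_iff (add_nonneg (mul_nonneg ht.1 dist_nonneg) (mul_nonneg h1t dist_nonneg))]
  intro i
  have h1 : dist (v i) (v' i) ≤ dist v v' := dist_le_pi_dist v v' i
  have h2 : dist (w i) (w' i) ≤ dist w w' := dist_le_pi_dist w w' i
  rw [Real.dist_eq] at *
  rw [cmb, cmb]
  have : t * v i + (1 - t) * w i - (t * v' i + (1 - t) * w' i)
      = t * (v i - v' i) + (1 - t) * (w i - w' i) := by ring
  rw [this]
  calc |t * (v i - v' i) + (1 - t) * (w i - w' i)|
      ≤ |t * (v i - v' i)| + |(1 - t) * (w i - w' i)| := abs_add_le _ _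
    _ = t * |v i - v' i| + (1 - t) * |w i - w' i| := by
        rw [abs_mul, abs_mul, abs_of_nonneg ht.1, abs_of_nonneg h1t]
    _ ≤ t * dist v v' + (1 - t) * dist w w' := by
        apply add_le_add
        · exact mul_le_mul_of_nonneg_left h1 ht.1
        · exact mul_le_mul_of_nonneg_left h2 h1t

theorem hausdorffDist_image2_cmb {n k : ℕ} {t : ℝ} (ht : t ∈ Set.Icc (0:ℝ) 1)
    {S1 S2 T1 T2 : Set ((Fin n × Fin k × Fin k) → ℝ)}
    (h1 : EMetric.hausdorffEdist S1 T1 ≠ ⊤) (h2 : EMetric.hausdorffEdist S2 T2 ≠ ⊤) :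
    Metric.hausdorffDist (Set.image2 (cmb t) S1 S2) (Set.image2 (cmb t) T1 T2) ≤
      t * Metric.hausdorffDist S1 T1 + (1 - t) * Metric.hausdorffDist S2 T2 := by
  have h1t : (0:ℝ) ≤ 1 - t := by linarith [ht.2]
  set d1 := Metric.hausdorffDist S1 T1
  set d2 := Metric.hausdorffDist S2 T2
  have hd1 : 0 ≤ d1 := Metric.hausdorffDist_nonneg
  have hd2 : 0 ≤ d2 := Metric.hausdorffDist_nonneg
  refine le_of_forall_pos_le_add fun ε hε => ?_
  have hle : Metric.hausdorffDist (Set.image2 (cmb t) S1 S2) (Set.image2 (cmb t) T1 T2) ≤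
      t * (d1 + ε) + (1 - t) * (d2 + ε) := by
    refine Metric.hausdorffDist_le_of_mem_dist (add_nonneg (mul_nonneg ht.1 (by linarith)) (mul_nonneg h1t (by linarith))) ?_ ?_
    · rintro x ⟨v, hv, w, hw, rfl⟩
      obtain ⟨v', hv', hdv⟩ := Metric.exists_dist_lt_of_hausdorffDist_lt hv
        (lt_add_of_pos_right d1 hε) h1
      obtain ⟨w', hw', hdw⟩ := Metric.exists_dist_lt_of_hausdorffDist_lt hw
        (lt_add_of_pos_right d2 hε) h2
      refine ⟨cmb t v' w', Set.mem_image2_of_mem hv' hw', ?_⟩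
      refine (dist_cmb_le ht v w v' w').trans (add_le_add ?_ ?_)
      · exact mul_le_mul_of_nonneg_left hdv.le ht.1
      · exact mul_le_mul_of_nonneg_left hdw.le h1t
    · rintro y ⟨v', hv', w', hw', rfl⟩
      obtain ⟨v, hv, hdv⟩ := Metric.exists_dist_lt_of_hausdorffDist_lt' hv'
        (lt_add_of_pos_right d1 hε) h1
      obtain ⟨w, hw, hdw⟩ := Metric.exists_dist_lt_of_hausdorffDist_lt' hw'
        (lt_add_of_pos_right d2 hε) h2
      refine ⟨cmb t v w, Set.mem_image2_of_mem hv hw, ?_⟩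
      rw [dist_comm]
      refine (dist_cmb_le ht v w v' w').trans (add_le_add ?_ ?_)
      · exact mul_le_mul_of_nonneg_left hdv.le ht.1
      · exact mul_le_mul_of_nonneg_left hdw.le h1t
  linarith

end MPAction
namespace MPAction

variable {Γ : Type*} [Group Γ] {X : Type*} [MeasurableSpace X] {μ : Measure X}

theorem hausdorffEdist_Pre_ne_top [IsProbabilityMeasure μ] (e : ℕ → Γ)
    (a b : MPAction Γ X μ) (n : ℕ) {k : ℕ} (hk : 0 < k) :
    EMetric.hausdorffEdist (Pre e a n k) (Pre e b n k) ≠ ⊤ :=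
  Metric.hausdorffEdist_ne_top_of_nonempty_of_bounded (Pre_nonempty e a n hk)
    (Pre_nonempty e b n hk)
    (Metric.isBounded_closedBall.subset (Pre_subset_closedBall e a n k))
    (Metric.isBounded_closedBall.subset (Pre_subset_closedBall e b n k))

theorem cnk_convex [IsProbabilityMeasure μ] (e : ℕ → Γ) {t : ℝ} (ht : t ∈ Set.Icc (0:ℝ) 1)
    (x y c f : MPAction Γ X μ) (n k : ℕ) :
    Metric.hausdorffDist (Cnk e (convComb t x y) n k) (Cnk e (convComb t c f) n k) ≤
      t * Metric.hausdorffDist (Cnk e x n k) (Cnk e c n k)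
        + (1 - t) * Metric.hausdorffDist (Cnk e y n k) (Cnk e f n k) := by
  have h1t : (0:ℝ) ≤ 1 - t := by linarith [ht.2]
  haveI : IsProbabilityMeasure (mixMeasure ![t, 1 - t] (fun _ => μ)) := isProb_mixMeasure₂ ht
  rcases Nat.eq_zero_or_pos k with hk | hk
  · subst hk
    rw [Cnk_eq_closure_Pre, Pre_eq_empty_of_zero, closure_empty, Metric.hausdorffDist_empty']
    exact add_nonneg (mul_nonneg ht.1 Metric.hausdorffDist_nonneg)
      (mul_nonneg h1t Metric.hausdorffDist_nonneg)
  · rw [Cnk_eq_closure_Pre, Cnk_eq_closure_Pre, Pre_convComb e ht x y, Pre_convComb e ht c f,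
      Metric.hausdorffDist_closure,
      show Cnk e x n k = closure (Pre e x n k) from rfl,
      show Cnk e c n k = closure (Pre e c n k) from rfl,
      show Cnk e y n k = closure (Pre e y n k) from rfl,
      show Cnk e f n k = closure (Pre e f n k) from rfl,
      Metric.hausdorffDist_closure, Metric.hausdorffDist_closure]
    exact hausdorffDist_image2_cmb ht (hausdorffEdist_Pre_ne_top e x c n hk)
      (hausdorffEdist_Pre_ne_top e y f n hk)

end MPAction
namespace MPAction

open scoped symmDiff

section MeasHelp

variable {Y : Type*} [MeasurableSpace Y] {ν : Measure Y} [IsFiniteMeasure ν]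

theorem toReal_measure_mono {S T : Set Y} (h : S ⊆ T) : (ν S).toReal ≤ (ν T).toReal :=
  ENNReal.toReal_mono (measure_ne_top ν T) (measure_mono h)

theorem toReal_measure_union_le (S T : Set Y) :
    (ν (S ∪ T)).toReal ≤ (ν S).toReal + (ν T).toReal := by
  rw [← ENNReal.toReal_add (measure_ne_top ν S) (measure_ne_top ν T)]
  exact ENNReal.toReal_mono (by finiteness) (measure_union_le S T)

theorem abs_toReal_sub_le_symmDiff (S T : Set Y) :
    |(ν S).toReal - (ν T).toReal| ≤ (ν (S ∆ T)).toReal := by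
  rw [abs_sub_le_iff]
  constructor
  · rw [sub_le_iff_le_add]
    have hsub : S ⊆ T ∪ S ∆ T := by
      intro x hx
      by_cases hT : x ∈ T
      · exact Or.inl hT
      · exact Or.inr (Set.mem_symmDiff.2 (Or.inl ⟨hx, hT⟩))
    exact (toReal_measure_mono hsub).trans ((toReal_measure_union_le T (S ∆ T)).trans
      (by rw [add_comm]))
  · rw [sub_le_iff_le_add]
    have hsub : T ⊆ S ∪ S ∆ T := by
      intro x hx
      by_cases hS : x ∈ S
      · exact Or.inl hS
      · exact Or.inr (Set.mem_symmDiff.2 (Or.inr ⟨hx, hS⟩))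
    exact (toReal_measure_mono hsub).trans ((toReal_measure_union_le S (S ∆ T)).trans
      (by rw [add_comm]))

theorem toReal_measure_iUnion_le {k : ℕ} (f : Fin k → Set Y) :
    (ν (⋃ i, f i)).toReal ≤ ∑ i, (ν (f i)).toReal := by
  rw [← ENNReal.toReal_sum (fun a _ => measure_ne_top ν (f a))]
  refine ENNReal.toReal_mono (ENNReal.sum_ne_top.2 fun a _ => measure_ne_top ν (f a)) ?_
  exact (measure_iUnion_le f).trans (le_of_eq (tsum_fintype _))

theorem toReal_measure_iUnion_disjoint {k : ℕ} {f : Fin k → Set Y}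
    (hm : ∀ i, MeasurableSet (f i)) (hd : Pairwise (Function.onFun Disjoint f)) :
    (ν (⋃ i, f i)).toReal = ∑ i, (ν (f i)).toReal := by
  rw [measure_iUnion hd hm, tsum_fintype, ENNReal.toReal_sum (fun a _ => measure_ne_top ν (f a))]

set_option linter.unusedSectionVars false in
theorem inter_symmDiff_inter_subset' (S S' T T' : Set Y) :
    (S ∩ T) ∆ (S' ∩ T') ⊆ S ∆ S' ∪ T ∆ T' := by
  intro x hx
  simp only [Set.mem_symmDiff, Set.mem_union, Set.mem_inter_iff] at *
  tauto

end MeasHelp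

section KeyEst

variable {Γ : Type*} [Group Γ] {Y : Type*} [MeasurableSpace Y] {ν : Measure Y}
  [IsFiniteMeasure ν]

theorem key_est (b : MPAction Γ Y ν) (γ : Γ) {Bq Br Dq Dr : Set Y}
    (hBq : MeasurableSet Bq) (hDq : MeasurableSet Dq) :
    |(ν (b.act γ '' Bq ∩ Br)).toReal - (ν (b.act γ '' Dq ∩ Dr)).toReal| ≤
      (ν (Bq ∆ Dq)).toReal + (ν (Br ∆ Dr)).toReal := by
  rw [act_image_eq_preimage, act_image_eq_preimage]
  refine (abs_toReal_sub_le_symmDiff _ _).trans ?_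
  have h1 : (b.act γ⁻¹ ⁻¹' Bq ∩ Br) ∆ (b.act γ⁻¹ ⁻¹' Dq ∩ Dr) ⊆
      b.act γ⁻¹ ⁻¹' (Bq ∆ Dq) ∪ Br ∆ Dr := by
    refine (inter_symmDiff_inter_subset' _ _ _ _).trans ?_
    rw [Set.preimage_symmDiff]
  refine (toReal_measure_mono h1).trans ?_
  refine (toReal_measure_union_le _ _).trans ?_
  have h2 : ν (b.act γ⁻¹ ⁻¹' (Bq ∆ Dq)) = ν (Bq ∆ Dq) :=
    (b.measurePreserving_act γ⁻¹).measure_preimage (hBq.symmDiff hDq).nullMeasurableSet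
  rw [h2]

end KeyEst

end MPAction
namespace MPAction

open scoped symmDiff

variable {Γ : Type*} [Group Γ] {X : Type*} [MeasurableSpace X] {μ : Measure X}
  {Y : Type*} [MeasurableSpace Y] {ν : Measure Y}

theorem act_one_image (a : MPAction Γ X μ) (S : Set X) : a.act 1 '' S = S := by
  rw [show a.act 1 = id from funext a.act_one, Set.image_id]

theorem Cnk_subset_of_weaklyContained [IsProbabilityMeasure μ] [IsProbabilityMeasure ν]
    {a : MPAction Γ X μ} {b : MPAction Γ Y ν} (h : WeaklyContained a b)
    (e : ℕ → Γ) (n k : ℕ) : Cnk e a n k ⊆ Cnk e b n k := by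
  classical
  rw [Cnk_eq_closure_Pre, Cnk_eq_closure_Pre]
  refine closure_minimal ?_ isClosed_closure
  intro v hv
  rcases Nat.eq_zero_or_pos k with hk | hk
  · subst hk; rw [Pre_eq_empty_of_zero] at hv; exact absurd hv (Set.notMem_empty v)
  obtain ⟨A, ⟨hAm, hAd, hAu⟩, hvA⟩ := hv
  rw [Metric.mem_closure_iff]
  intro ε hε
  set M : ℝ := 1 + 4 * k + 2 * k ^ 2 with hM
  have hMpos : 0 < M := by positivity
  set δ : ℝ := ε / (2 * M) with hδdef
  have hδ : 0 < δ := by positivity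
  set F : Finset Γ := insert 1 (Finset.image e (Finset.range n)) with hF
  obtain ⟨B, hBm, hest⟩ := h k A hAm F δ hδ
  have h1F : (1 : Γ) ∈ F := Finset.mem_insert_self _ _
  -- consequences of the estimate for γ = 1
  have hBij : ∀ i j : Fin k, i ≠ j → (ν (B i ∩ B j)).toReal < δ := by
    intro i j hij
    have h1 := hest 1 h1F i j
    rw [act_one_image, act_one_image, Set.disjoint_iff_inter_eq_empty.1 (hAd hij)] at h1
    rwa [measure_empty, ENNReal.toReal_zero, zero_sub, abs_neg,
      abs_of_nonneg ENNReal.toReal_nonneg] at h1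
  have hBi : ∀ i : Fin k, (μ (A i)).toReal - δ < (ν (B i)).toReal := by
    intro i
    have h1 := hest 1 h1F i i
    rw [act_one_image, act_one_image, Set.inter_self, Set.inter_self] at h1
    have h2 := (abs_lt.1 h1).2
    linarith
  -- disjointification
  set z : Fin k := ⟨0, hk⟩ with hz
  set E : Fin k → Set Y := fun i => B i \ ⋃ (l : Fin k) (_ : l < i), B l with hE
  set U : Set Y := ⋃ (j : Fin k) (_ : j ≠ z), E j with hU
  set D : Fin k → Set Y := fun i => if i = z then Uᶜ else E i with hDdef
  have hEm : ∀ i, MeasurableSet (E i) := fun i =>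
    (hBm i).diff (MeasurableSet.iUnion fun l => MeasurableSet.iUnion fun _ => hBm l)
  have hUm : MeasurableSet U := MeasurableSet.iUnion fun j => MeasurableSet.iUnion fun _ => hEm j
  have hDz : D z = Uᶜ := by rw [hDdef]; simp
  have hDne : ∀ i, i ≠ z → D i = E i := by
    intro i hi; rw [hDdef]; simp [hi]
  have hDm : ∀ i, MeasurableSet (D i) := by
    intro i
    by_cases hi : i = z
    · subst hi; rw [hDz]; exact hUm.compl
    · rw [hDne i hi]; exact hEm i
  have hEsub : ∀ i, E i ⊆ B i := fun i => Set.diff_subset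
  have hEd : ∀ i j : Fin k, i < j → Disjoint (E i) (E j) := by
    intro i j hij
    rw [Set.disjoint_left]
    intro x hxi hxj
    exact hxj.2 (Set.mem_iUnion.2 ⟨i, Set.mem_iUnion.2 ⟨hij, hEsub i hxi⟩⟩)
  have hEd' : Pairwise (Function.onFun Disjoint E) := by
    intro i j hij
    rcases lt_or_gt_of_ne hij with h' | h'
    · exact hEd i j h'
    · exact (hEd j i h').symm
  have hEz : E z = B z := by
    have h0 : (⋃ (l : Fin k) (_ : l < z), B l) = ∅ := by
      refine Set.eq_empty_iff_forall_notMem.2 fun x hx => ?_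
      obtain ⟨l, hl⟩ := Set.mem_iUnion.1 hx
      obtain ⟨hlz, _⟩ := Set.mem_iUnion.1 hl
      have : l.1 < 0 := hlz
      omega
    rw [hE]; dsimp only; rw [h0, Set.diff_empty]
  have hEB : (⋃ i, E i) = ⋃ i, B i := by
    apply Set.Subset.antisymm
    · exact Set.iUnion_mono hEsub
    · intro x hx
      have hP : ∃ m : ℕ, ∃ hm : m < k, x ∈ B ⟨m, hm⟩ := by
        obtain ⟨⟨m, hm⟩, hi⟩ := Set.mem_iUnion.1 hx
        exact ⟨m, hm, hi⟩
      obtain ⟨hm, hxm⟩ := Nat.find_spec hP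
      refine Set.mem_iUnion.2 ⟨⟨Nat.find hP, hm⟩, hxm, ?_⟩
      intro hmem
      obtain ⟨l, hl⟩ := Set.mem_iUnion.1 hmem
      obtain ⟨hlt, hxl⟩ := Set.mem_iUnion.1 hl
      have hlval : l.1 < Nat.find hP := hlt
      exact Nat.find_min hP hlval ⟨l.2, hxl⟩
  have hDpart : IsPartition D := by
    refine ⟨hDm, ?_, ?_⟩
    · intro i j hij
      simp only [Function.onFun]
      by_cases hiz : i = z
      · subst hiz
        have hjz : j ≠ z := fun hc => hij hc.symm
        rw [hDz, hDne j hjz]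
        exact disjoint_compl_left.mono_right
          (Set.subset_iUnion₂ (s := fun j _ => E j) j hjz)
      · by_cases hjz : j = z
        · subst hjz
          rw [hDz, hDne i hiz]
          exact (disjoint_compl_left.mono_right
            (Set.subset_iUnion₂ (s := fun j _ => E j) i hiz)).symm
        · rw [hDne i hiz, hDne j hjz]
          exact hEd' hij
    · apply Set.eq_univ_of_forall
      intro x
      by_cases hxU : x ∈ U
      · obtain ⟨j, hj⟩ := Set.mem_iUnion.1 hxU
        obtain ⟨hjz, hxj⟩ := Set.mem_iUnion.1 hj
        exact Set.mem_iUnion.2 ⟨j, by rw [hDne j hjz]; exact hxj⟩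
      · exact Set.mem_iUnion.2 ⟨z, by rw [hDz]; exact hxU⟩
  -- quantitative bounds
  have hBE : ∀ i : Fin k, (ν (B i \ E i)).toReal ≤ k * δ := by
    intro i
    set S : Fin k → Set Y := fun l => if l = i then ∅ else B i ∩ B l with hS
    have hsub : B i \ E i ⊆ ⋃ l, S l := by
      rintro x ⟨hxB, hxE⟩
      have hxin : x ∈ ⋃ (l : Fin k) (_ : l < i), B l := by
        by_contra hc
        exact hxE ⟨hxB, hc⟩
      obtain ⟨l, hl⟩ := Set.mem_iUnion.1 hxin
      obtain ⟨hli, hxl⟩ := Set.mem_iUnion.1 hl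
      refine Set.mem_iUnion.2 ⟨l, ?_⟩
      rw [hS]; dsimp only
      rw [if_neg (ne_of_lt hli)]
      exact ⟨hxB, hxl⟩
    refine (toReal_measure_mono hsub).trans ((toReal_measure_iUnion_le S).trans ?_)
    have hSl : ∀ l, (ν (S l)).toReal ≤ δ := by
      intro l
      rw [hS]; dsimp only
      split
      · simp [hδ.le]
      · next hne => exact (hBij i l (fun hc => hne hc.symm)).le
    calc ∑ l, (ν (S l)).toReal ≤ ∑ _l : Fin k, δ := Finset.sum_le_sum fun l _ => hSl l
      _ = k * δ := by rw [Finset.sum_const, Finset.card_univ, Fintype.card_fin, nsmul_eq_mul]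
  have hBz_not_Dz : (ν (B z \ D z)).toReal ≤ k * δ := by
    set S : Fin k → Set Y := fun l => if l = z then ∅ else B z ∩ B l with hS
    have hsub : B z \ D z ⊆ ⋃ l, S l := by
      rintro x ⟨hxB, hxD⟩
      rw [hDz] at hxD
      have hxU : x ∈ U := by simpa using hxD
      obtain ⟨j, hj⟩ := Set.mem_iUnion.1 hxU
      obtain ⟨hjz, hxj⟩ := Set.mem_iUnion.1 hj
      refine Set.mem_iUnion.2 ⟨j, ?_⟩
      rw [hS]; dsimp only
      rw [if_neg hjz]
      exact ⟨hxB, hEsub j hxj⟩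
    refine (toReal_measure_mono hsub).trans ((toReal_measure_iUnion_le S).trans ?_)
    have hSl : ∀ l, (ν (S l)).toReal ≤ δ := by
      intro l
      rw [hS]; dsimp only
      split
      · simp [hδ.le]
      · next hne => exact (hBij z l (fun hc => hne hc.symm)).le
    calc ∑ l, (ν (S l)).toReal ≤ ∑ _l : Fin k, δ := Finset.sum_le_sum fun l _ => hSl l
      _ = k * δ := by rw [Finset.sum_const, Finset.card_univ, Fintype.card_fin, nsmul_eq_mul]
  have hDz_not_Bz : (ν (D z \ B z)).toReal ≤ k * δ + k ^ 2 * δ := by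
    have hsub : D z \ B z ⊆ (⋃ j, B j)ᶜ := by
      rintro x ⟨hxD, hxB⟩
      rw [hDz] at hxD
      intro hxin
      rw [← hEB] at hxin
      obtain ⟨j, hxj⟩ := Set.mem_iUnion.1 hxin
      by_cases hjz : j = z
      · subst hjz
        rw [hEz] at hxj
        exact hxB hxj
      · exact hxD (Set.mem_iUnion.2 ⟨j, Set.mem_iUnion.2 ⟨hjz, hxj⟩⟩)
    refine (toReal_measure_mono hsub).trans ?_
    have hMeas : MeasurableSet (⋃ j, B j) := MeasurableSet.iUnion hBm
    have hcompl : (ν ((⋃ j, B j)ᶜ)).toReal = 1 - (ν (⋃ j, B j)).toReal := by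
      have h1 := measure_add_measure_compl (μ := ν) hMeas
      have h2 := congrArg ENNReal.toReal h1
      rw [ENNReal.toReal_add (measure_ne_top _ _) (measure_ne_top _ _), measure_univ,
        ENNReal.toReal_one] at h2
      linarith
    rw [hcompl]
    have hsum : (ν (⋃ j, B j)).toReal = ∑ i, (ν (E i)).toReal := by
      rw [← hEB, toReal_measure_iUnion_disjoint hEm hEd']
    have hEi_lb : ∀ i, (μ (A i)).toReal - δ - k * δ ≤ (ν (E i)).toReal := by
      intro i
      have h1 : (ν (B i)).toReal ≤ (ν (E i)).toReal + (ν (B i \ E i)).toReal := by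
        have hss : B i ⊆ E i ∪ (B i \ E i) := by
          intro x hx
          by_cases hxE : x ∈ E i
          · exact Or.inl hxE
          · exact Or.inr ⟨hx, hxE⟩
        exact (toReal_measure_mono hss).trans (toReal_measure_union_le _ _)
      have h2 := hBi i
      have h3 := hBE i
      linarith
    have hAsum : ∑ i, (μ (A i)).toReal = 1 := by
      rw [← toReal_measure_iUnion_disjoint hAm hAd, hAu, measure_univ, ENNReal.toReal_one]
    have hlb : ∑ i, ((μ (A i)).toReal - δ - k * δ) ≤ ∑ i, (ν (E i)).toReal :=
      Finset.sum_le_sum fun i _ => hEi_lb i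
    have hexp : ∑ i, ((μ (A i)).toReal - δ - k * δ) = 1 - k * δ - k * (k * δ) := by
      rw [Finset.sum_sub_distrib, Finset.sum_sub_distrib, hAsum, Finset.sum_const,
        Finset.sum_const, Finset.card_univ, Fintype.card_fin, nsmul_eq_mul, nsmul_eq_mul]
    rw [hsum] at *
    nlinarith [hlb, hexp]
  have herr : ∀ i, (ν (B i ∆ D i)).toReal ≤ (2 * k + k ^ 2) * δ := by
    intro i
    by_cases hiz : i = z
    · subst hiz
      have h1 : B z ∆ D z = (B z \ D z) ∪ (D z \ B z) := Set.symmDiff_def _ _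
      rw [h1]
      refine (toReal_measure_union_le _ _).trans ?_
      have := hBz_not_Dz
      have := hDz_not_Bz
      nlinarith
    · rw [hDne i hiz, symmDiff_of_ge (hEsub i)]
      have h1 := hBE i
      have hk0 : (0:ℝ) ≤ (k:ℝ) := Nat.cast_nonneg k
      nlinarith
  -- conclusion
  refine ⟨fun i => (ν (b.act (e i.1.1) '' D i.2.1 ∩ D i.2.2)).toReal,
    ⟨D, hDpart, fun p q r => rfl⟩, ?_⟩
  rw [dist_pi_lt_iff hε]
  rintro ⟨p, q, r⟩
  have hFp : e p.1 ∈ F := by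
    rw [hF]
    exact Finset.mem_insert_of_mem (Finset.mem_image.2 ⟨p.1, Finset.mem_range.2 p.2, rfl⟩)
  have h1 := hest (e p.1) hFp q r
  have h2 := key_est b (e p.1) (hBm q) (hDm q) (Br := B r) (Dr := D r)
  rw [Real.dist_eq, hvA p q r]
  have h3 := herr q
  have h4 := herr r
  have habs := abs_sub_le ((μ (a.act (e p.1) '' A q ∩ A r)).toReal)
    ((ν (b.act (e p.1) '' B q ∩ B r)).toReal)
    ((ν (b.act (e p.1) '' D q ∩ D r)).toReal)
  have hδM : δ * M = ε / 2 := by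
    rw [hδdef]
    field_simp
  have hMexp : δ + ((2 * k + k ^ 2) * δ + (2 * k + k ^ 2) * δ) = δ * M := by
    rw [hM]; ring
  have : |(μ (a.act (e p.1) '' A q ∩ A r)).toReal
      - (ν (b.act (e p.1) '' D q ∩ D r)).toReal| < δ + ((2 * k + k ^ 2) * δ
      + (2 * k + k ^ 2) * δ) := by
    calc |(μ (a.act (e p.1) '' A q ∩ A r)).toReal
        - (ν (b.act (e p.1) '' D q ∩ D r)).toReal|
        ≤ |(μ (a.act (e p.1) '' A q ∩ A r)).toReal
            - (ν (b.act (e p.1) '' B q ∩ B r)).toReal|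
          + |(ν (b.act (e p.1) '' B q ∩ B r)).toReal
            - (ν (b.act (e p.1) '' D q ∩ D r)).toReal| := habs
      _ < δ + ((2 * k + k ^ 2) * δ + (2 * k + k ^ 2) * δ) :=
          add_lt_add_of_lt_of_le h1 (h2.trans (add_le_add h3 h4))
  rw [hMexp, hδM] at this
  linarith

end MPAction
namespace MPAction

variable {Γ : Type*} [Group Γ] {X : Type*} [MeasurableSpace X] {μ : Measure X}
  {Y : Type*} [MeasurableSpace Y] {ν : Measure Y}
  {W : Type*} [MeasurableSpace W] {ρ : Measure W}

theorem Cnk_eq_of_weakEquiv [IsProbabilityMeasure μ] [IsProbabilityMeasure ν]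
    {a : MPAction Γ X μ} {b : MPAction Γ Y ν} (h : WeakEquiv a b) (e : ℕ → Γ) (n k : ℕ) :
    Cnk e a n k = Cnk e b n k :=
  Set.Subset.antisymm (Cnk_subset_of_weaklyContained h.1 e n k)
    (Cnk_subset_of_weaklyContained h.2 e n k)

theorem Cnk_subset_closedBall [IsProbabilityMeasure μ] (e : ℕ → Γ) (a : MPAction Γ X μ)
    (n k : ℕ) : Cnk e a n k ⊆ Metric.closedBall 0 1 :=
  closure_minimal (Pre_subset_closedBall e a n k) Metric.isClosed_closedBall

theorem hausdorffDist_Cnk_le_two [IsProbabilityMeasure μ] [IsProbabilityMeasure ν]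
    (e : ℕ → Γ) (a : MPAction Γ X μ) (b : MPAction Γ Y ν) (n k : ℕ) :
    Metric.hausdorffDist (Cnk e a n k) (Cnk e b n k) ≤ 2 := by
  rcases Set.eq_empty_or_nonempty (Cnk e a n k) with ha | ha
  · rw [ha, Metric.hausdorffDist_empty']; norm_num
  rcases Set.eq_empty_or_nonempty (Cnk e b n k) with hb | hb
  · rw [hb, Metric.hausdorffDist_empty]; norm_num
  refine Metric.hausdorffDist_le_of_mem_dist (by norm_num) ?_ ?_
  · intro x hx
    obtain ⟨y, hy⟩ := hb
    refine ⟨y, hy, ?_⟩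
    have h1 := Cnk_subset_closedBall e a n k hx
    have h2 := Cnk_subset_closedBall e b n k hy
    rw [Metric.mem_closedBall] at h1 h2
    calc dist x y ≤ dist x 0 + dist 0 y := dist_triangle _ _ _
      _ ≤ 1 + 1 := add_le_add h1 (by rwa [dist_comm])
      _ = 2 := by norm_num
  · intro y hy
    obtain ⟨x, hx⟩ := ha
    refine ⟨x, hx, ?_⟩
    have h1 := Cnk_subset_closedBall e a n k hx
    have h2 := Cnk_subset_closedBall e b n k hy
    rw [Metric.mem_closedBall] at h1 h2
    calc dist y x ≤ dist y 0 + dist 0 x := dist_triangle _ _ _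
      _ ≤ 1 + 1 := add_le_add h2 (by rwa [dist_comm])
      _ = 2 := by norm_num

theorem wfun_eq (nk : ℕ × ℕ) :
    (2:ℝ) ^ (-(nk.1 : ℤ) - (nk.2 : ℤ)) = (1/2:ℝ) ^ nk.1 * (1/2:ℝ) ^ nk.2 := by
  rw [show (-(nk.1 : ℤ) - (nk.2 : ℤ)) = (-(nk.1:ℤ)) + (-(nk.2:ℤ)) by ring,
    zpow_add₀ (two_ne_zero), zpow_neg, zpow_neg, zpow_natCast, zpow_natCast]
  rw [div_pow, div_pow]
  norm_num

theorem summable_wfun : Summable (fun nk : ℕ × ℕ => (2:ℝ) ^ (-(nk.1 : ℤ) - (nk.2 : ℤ))) := by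
  have h : Summable (fun n : ℕ => (1/2:ℝ) ^ n) :=
    summable_geometric_of_lt_one (by norm_num) (by norm_num)
  have := h.mul_of_nonneg h (fun n => by positivity) (fun n => by positivity)
  exact this.congr fun nk => (wfun_eq nk).symm

theorem wfun_pos (nk : ℕ × ℕ) : (0:ℝ) < (2:ℝ) ^ (-(nk.1 : ℤ) - (nk.2 : ℤ)) :=
  zpow_pos (by norm_num) _

theorem summable_dWE_terms [IsProbabilityMeasure μ] [IsProbabilityMeasure ν]
    (e : ℕ → Γ) (a : MPAction Γ X μ) (b : MPAction Γ Y ν) :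
    Summable (fun nk : ℕ × ℕ => (2:ℝ) ^ (-(nk.1 : ℤ) - (nk.2 : ℤ)) *
      Metric.hausdorffDist (Cnk e a nk.1 nk.2) (Cnk e b nk.1 nk.2)) := by
  refine Summable.of_nonneg_of_le
    (fun nk => mul_nonneg (wfun_pos nk).le Metric.hausdorffDist_nonneg)
    (fun nk => ?_) (summable_wfun.mul_right 2)
  exact mul_le_mul_of_nonneg_left (hausdorffDist_Cnk_le_two e a b nk.1 nk.2) (wfun_pos nk).le

theorem dWE_nonneg (e : ℕ → Γ) (a : MPAction Γ X μ) (b : MPAction Γ Y ν) :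
    0 ≤ dWE e a b :=
  tsum_nonneg fun nk => mul_nonneg (wfun_pos nk).le Metric.hausdorffDist_nonneg

theorem dWE_convComb_le [IsProbabilityMeasure μ] (e : ℕ → Γ) {t : ℝ}
    (ht : t ∈ Set.Icc (0:ℝ) 1) (x y bx bb : MPAction Γ X μ) :
    dWE e (convComb t x y) (convComb t bx bb) ≤ t * dWE e x bx + (1 - t) * dWE e y bb := by
  haveI : IsProbabilityMeasure (mixMeasure ![t, 1 - t] (fun _ => μ)) := isProb_mixMeasure₂ ht
  have h1t : (0:ℝ) ≤ 1 - t := by linarith [ht.2]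
  rw [dWE, dWE, dWE, ← tsum_mul_left, ← tsum_mul_left,
    ← Summable.tsum_add ((summable_dWE_terms e x bx).mul_left t)
      ((summable_dWE_terms e y bb).mul_left (1 - t))]
  refine Summable.tsum_le_tsum (fun nk => ?_) (summable_dWE_terms e _ _)
    (((summable_dWE_terms e x bx).mul_left t).add
      ((summable_dWE_terms e y bb).mul_left (1 - t)))
  have h := cnk_convex e ht x y bx bb nk.1 nk.2
  have hw := (wfun_pos nk).le
  calc (2:ℝ) ^ (-(nk.1 : ℤ) - (nk.2 : ℤ)) *
      Metric.hausdorffDist (Cnk e (convComb t x y) nk.1 nk.2)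
        (Cnk e (convComb t bx bb) nk.1 nk.2)
      ≤ (2:ℝ) ^ (-(nk.1 : ℤ) - (nk.2 : ℤ)) *
        (t * Metric.hausdorffDist (Cnk e x nk.1 nk.2) (Cnk e bx nk.1 nk.2)
          + (1 - t) * Metric.hausdorffDist (Cnk e y nk.1 nk.2) (Cnk e bb nk.1 nk.2)) :=
        mul_le_mul_of_nonneg_left h hw
    _ = t * ((2:ℝ) ^ (-(nk.1 : ℤ) - (nk.2 : ℤ)) *
          Metric.hausdorffDist (Cnk e x nk.1 nk.2) (Cnk e bx nk.1 nk.2))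
        + (1 - t) * ((2:ℝ) ^ (-(nk.1 : ℤ) - (nk.2 : ℤ)) *
          Metric.hausdorffDist (Cnk e y nk.1 nk.2) (Cnk e bb nk.1 nk.2)) := by ring

end MPAction

/-- For any convex subset `K` of `A_∼(Γ,X,μ)` (given as a set of actions
closed, up to weak equivalence, under convex combinations), the distance function
`x ↦ d(x,K) = inf_{b ∈ K} d(x,b)` is convex; moreover the Hausdorff distance between the sets
`C_{n,k}` of convex combinations satisfies the corresponding convexity inequality. -/
theorem dist_to_convex_set_is_convex
    (Γ : Type) [Group Γ] [Countable Γ]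
    (X : Type) [MeasurableSpace X] [StandardBorelSpace X]
    (μ : Measure X) [IsProbabilityMeasure μ] [NullSingletonClass μ]
    (e : ℕ → Γ) (he : Function.Surjective e) :
    (∀ K : Set (MPAction Γ X μ),
      (∀ a ∈ K, ∀ b ∈ K, ∀ t ∈ Set.Icc (0:ℝ) 1,
        ∃ c ∈ K, MPAction.WeakEquiv c (MPAction.convComb t a b)) →
      ∀ (x y : MPAction Γ X μ) (t : ℝ), t ∈ Set.Icc (0:ℝ) 1 →
        sInf ((fun b => MPAction.dWE e (MPAction.convComb t x y) b) '' K) ≤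
          t * sInf ((fun b => MPAction.dWE e x b) '' K)
            + (1 - t) * sInf ((fun b => MPAction.dWE e y b) '' K))
    ∧ (∀ (x y c f : MPAction Γ X μ) (t : ℝ), t ∈ Set.Icc (0:ℝ) 1 → ∀ n k : ℕ,
        Metric.hausdorffDist (MPAction.Cnk e (MPAction.convComb t x y) n k)
            (MPAction.Cnk e (MPAction.convComb t c f) n k) ≤
          t * Metric.hausdorffDist (MPAction.Cnk e x n k) (MPAction.Cnk e c n k)
            + (1 - t) * Metric.hausdorffDist (MPAction.Cnk e y n k)
                (MPAction.Cnk e f n k)) := by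
  constructor
  · intro K hK x y t ht
    rcases Set.eq_empty_or_nonempty K with hKe | hKne
    · simp [hKe, Real.sInf_empty]
    · haveI : IsProbabilityMeasure (MPAction.mixMeasure ![t, 1 - t] (fun _ : Fin 2 => μ)) :=
        MPAction.isProb_mixMeasure₂ ht
      have h1t : (0:ℝ) ≤ 1 - t := by linarith [ht.2]
      refine le_of_forall_pos_le_add fun ε hε => ?_
      obtain ⟨dx, hdx_mem, hdx⟩ := Real.lt_sInf_add_pos (hKne.image _) hε
      obtain ⟨bx, hbx, rfl⟩ := hdx_mem
      obtain ⟨dy, hdy_mem, hdy⟩ := Real.lt_sInf_add_pos (hKne.image _) hε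
      obtain ⟨bb, hbb, rfl⟩ := hdy_mem
      obtain ⟨c, hcK, hc⟩ := hK bx hbx bb hbb t ht
      have heq : MPAction.dWE e (MPAction.convComb t x y) c
          = MPAction.dWE e (MPAction.convComb t x y) (MPAction.convComb t bx bb) :=
        tsum_congr fun nk => by rw [MPAction.Cnk_eq_of_weakEquiv hc e nk.1 nk.2]
      have hbdd : BddBelow ((fun b => MPAction.dWE e (MPAction.convComb t x y) b) '' K) := by
        refine ⟨0, ?_⟩
        rintro r ⟨b, _, rfl⟩
        exact MPAction.dWE_nonneg e _ b
      have h2 : sInf ((fun b => MPAction.dWE e (MPAction.convComb t x y) b) '' K) ≤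
          MPAction.dWE e (MPAction.convComb t x y) c :=
        csInf_le hbdd (Set.mem_image_of_mem _ hcK)
      have h3 := MPAction.dWE_convComb_le e ht x y bx bb
      calc sInf ((fun b => MPAction.dWE e (MPAction.convComb t x y) b) '' K)
          ≤ MPAction.dWE e (MPAction.convComb t x y) c := h2
        _ = MPAction.dWE e (MPAction.convComb t x y) (MPAction.convComb t bx bb) := heq
        _ ≤ t * MPAction.dWE e x bx + (1 - t) * MPAction.dWE e y bb := h3
        _ ≤ t * (sInf ((fun b => MPAction.dWE e x b) '' K) + ε)
            + (1 - t) * (sInf ((fun b => MPAction.dWE e y b) '' K) + ε) :=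
            add_le_add (mul_le_mul_of_nonneg_left hdx.le ht.1)
              (mul_le_mul_of_nonneg_left hdy.le h1t)
        _ = t * sInf ((fun b => MPAction.dWE e x b) '' K)
            + (1 - t) * sInf ((fun b => MPAction.dWE e y b) '' K) + ε := by ring
  · intro x y c f t ht n k
    exact MPAction.cnk_convex e ht x y c f n k
end

section
/- Let Γ be a countable discrete group, (λ_i)_{i=1}^∞ ⊆ [0,1] with Σ_{i=1}^∞ λ_i = 1, and for each i let a_i and b_i be measure-preserving actions of Γ on probability spaces (Y_i,ν_i) and (Z_i,ρ_i) respectively with a_i ≺ b_i. Then Σ_{i=1}^∞ λ_i a_i ≺ Σ_{i=1}^∞ λ_i b_i, where Σ_{i=1}^∞ λ_i a_i denotes the action of Γ on the disjoint union ⊔_i Y_i equipped with the probability measure Σ_i λ_i ν_i, acting like a_i on Y_i. -/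
open MeasureTheory Filter Topology Set

section Aux

open MPAction

variable {Γ : Type*} [Group Γ] {X : Type*} [MeasurableSpace X] {μ : Measure X}
variable {ι : Type*} {Z : ι → Type*} [∀ i, MeasurableSpace (Z i)]

/-- The image under a group action equals a preimage under the inverse. -/
theorem MPAction.image_act (c : MPAction Γ X μ) (γ : Γ) (A : Set X) :
    c.act γ '' A = c.act γ⁻¹ ⁻¹' A := by
  ext x
  constructor
  · rintro ⟨y, hy, rfl⟩
    simpa [← c.act_mul, c.act_one] using hy
  · intro hx
    exact ⟨c.act γ⁻¹ x, hx, by simp [← c.act_mul, c.act_one]⟩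

theorem measurableSet_sigma_iff' {s : Set ((i : ι) × Z i)} :
    MeasurableSet s ↔ ∀ i, MeasurableSet (Sigma.mk i ⁻¹' s) := by
  rw [Sigma.instMeasurableSpace, MeasurableSpace.measurableSet_iInf]
  rfl

theorem mixMeasure_apply (lam : ι → ℝ) (νs : ∀ i, Measure (Z i)) {s : Set ((i : ι) × Z i)}
    (hs : MeasurableSet s) :
    mixMeasure lam νs s = ∑' i, ENNReal.ofReal (lam i) * νs i (Sigma.mk i ⁻¹' s) := by
  rw [mixMeasure, Measure.sum_apply _ hs]
  congr 1
  funext i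
  rw [Measure.smul_apply, Measure.map_apply (measurable_sigmaMk' i) hs, smul_eq_mul]

theorem mixMeasure_apply_toReal_s14 (lam : ι → ℝ) (νs : ∀ i, Measure (Z i))
    [∀ i, IsProbabilityMeasure (νs i)] (hlam : ∀ i, 0 ≤ lam i) {s : Set ((i : ι) × Z i)}
    (hs : MeasurableSet s) :
    (mixMeasure lam νs s).toReal = ∑' i, lam i * (νs i (Sigma.mk i ⁻¹' s)).toReal := by
  rw [mixMeasure_apply lam νs hs, ENNReal.tsum_toReal_eq]
  · congr 1
    funext i
    rw [ENNReal.toReal_mul, ENNReal.toReal_ofReal (hlam i)]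
  · intro i
    exact ENNReal.mul_ne_top ENNReal.ofReal_ne_top (measure_ne_top _ _)

end Aux

/-- If `λ_i ∈ [0,1]` with `Σ_{i} λ_i = 1` and `a_i ≺ b_i` are weakly
contained measure-preserving actions of a countable group `Γ` on probability spaces
`(Y_i,ν_i)` and `(Z_i,ρ_i)`, then `Σ_i λ_i a_i ≺ Σ_i λ_i b_i`, where `Σ_i λ_i a_i` is the
action on the disjoint union `⊔_i Y_i` with the probability measure `Σ_i λ_i ν_i`, acting
like `a_i` on `Y_i`. -/
theorem weaklyContained_mix
    (Γ : Type) [Group Γ] [Countable Γ]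
    (Y Z : ℕ → Type) [∀ i, MeasurableSpace (Y i)] [∀ i, MeasurableSpace (Z i)]
    (ν : ∀ i, Measure (Y i)) (ρ : ∀ i, Measure (Z i))
    [∀ i, IsProbabilityMeasure (ν i)] [∀ i, IsProbabilityMeasure (ρ i)]
    (lam : ℕ → ℝ) (hmem : ∀ i, lam i ∈ Set.Icc (0:ℝ) 1) (hsum : ∑' i, lam i = 1)
    (a : ∀ i, MPAction Γ (Y i) (ν i)) (b : ∀ i, MPAction Γ (Z i) (ρ i))
    (h : ∀ i, MPAction.WeaklyContained (a i) (b i)) :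
    MPAction.WeaklyContained (MPAction.mix lam a) (MPAction.mix lam b) := by
  intro n A hA F ε hε
  have hnn : ∀ i, 0 ≤ lam i := fun i => (hmem i).1
  have hsummable : Summable lam := by
    by_contra hc
    rw [tsum_eq_zero_of_not_summable hc] at hsum
    norm_num at hsum
  -- choose N with small tail
  obtain ⟨N, hN⟩ : ∃ N, ∑' i, lam (i + N) < ε / 4 := by
    have := ((tendsto_sum_nat_add lam).eventually
      (eventually_lt_nhds (show (0:ℝ) < ε / 4 by positivity))).exists
    obtain ⟨N, hN⟩ := this
    exact ⟨N, by simpa [add_comm] using hN⟩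
  -- apply weak containment for each index
  have hA' : ∀ i (q : Fin n), MeasurableSet (Sigma.mk i ⁻¹' A q) :=
    fun i q => MPAction.measurable_sigmaMk' i (hA q)
  choose B hBmeas hBest using fun i => h i n (fun q => Sigma.mk i ⁻¹' A q) (hA' i) F (ε / 4)
    (by positivity)
  -- assemble the candidate sets
  set B' : Fin n → Set ((i : ℕ) × Z i) :=
    (fun q => ⋃ i ∈ Finset.range N, Sigma.mk i '' B i q) with hB'def
  have hpre : ∀ (j : ℕ) (q : Fin n),
      Sigma.mk j ⁻¹' B' q = if j < N then B j q else ∅ := by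
    intro j q
    ext z
    simp only [hB'def, Set.mem_preimage, Set.mem_iUnion, Set.mem_image, Finset.mem_range]
    constructor
    · rintro ⟨i, hi, x, hx, heq⟩
      obtain ⟨rfl, h2⟩ := Sigma.mk.inj_iff.1 heq
      cases eq_of_heq h2
      rw [if_pos hi]
      exact hx
    · intro hz
      by_cases hj : j < N
      · rw [if_pos hj] at hz
        exact ⟨j, hj, z, hz, rfl⟩
      · rw [if_neg hj] at hz
        exact absurd hz (Set.notMem_empty z)
  have hB'meas : ∀ q, MeasurableSet (B' q) := by
    intro q
    rw [measurableSet_sigma_iff']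
    intro j
    rw [hpre j q]
    split
    · exact hBmeas _ q
    · exact MeasurableSet.empty
  refine ⟨B', hB'meas, ?_⟩
  intro γ hγ q r
  -- measurability of relevant sets
  have hAimg : MeasurableSet ((MPAction.mix lam a).act γ '' A q ∩ A r) := by
    rw [(MPAction.mix lam a).image_act]
    exact (((MPAction.mix lam a).measurePreserving_act γ⁻¹).measurable (hA q)).inter (hA r)
  have hBimg : MeasurableSet ((MPAction.mix lam b).act γ '' B' q ∩ B' r) := by
    rw [(MPAction.mix lam b).image_act]
    exact (((MPAction.mix lam b).measurePreserving_act γ⁻¹).measurable (hB'meas q)).inter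
      (hB'meas r)
  -- component identification
  have hcompA : ∀ i, Sigma.mk i ⁻¹' ((MPAction.mix lam a).act γ '' A q ∩ A r)
      = (a i).act γ '' (Sigma.mk i ⁻¹' A q) ∩ Sigma.mk i ⁻¹' A r := by
    intro i
    rw [Set.preimage_inter, (MPAction.mix lam a).image_act, (a i).image_act]
    rfl
  have hcompB : ∀ i, Sigma.mk i ⁻¹' ((MPAction.mix lam b).act γ '' B' q ∩ B' r)
      = (b i).act γ '' (Sigma.mk i ⁻¹' B' q) ∩ Sigma.mk i ⁻¹' B' r := by
    intro i
    rw [Set.preimage_inter, (MPAction.mix lam b).image_act, (b i).image_act]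
    rfl
  -- the two tsum expressions
  set x : ℕ → ℝ := fun i =>
    lam i * ((ν i) ((a i).act γ '' (Sigma.mk i ⁻¹' A q) ∩ Sigma.mk i ⁻¹' A r)).toReal with hxdef
  set y : ℕ → ℝ := fun i =>
    lam i * ((ρ i) ((b i).act γ '' (Sigma.mk i ⁻¹' B' q) ∩ Sigma.mk i ⁻¹' B' r)).toReal
    with hydef
  have hLHS : ((MPAction.mixMeasure lam ν) ((MPAction.mix lam a).act γ '' A q ∩ A r)).toReal
      = ∑' i, x i := by
    rw [mixMeasure_apply_toReal_s14 lam ν hnn hAimg]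
    exact tsum_congr fun i => by rw [hxdef]; rw [hcompA i]
  have hRHS : ((MPAction.mixMeasure lam ρ) ((MPAction.mix lam b).act γ '' B' q ∩ B' r)).toReal
      = ∑' i, y i := by
    rw [mixMeasure_apply_toReal_s14 lam ρ hnn hBimg]
    exact tsum_congr fun i => by rw [hydef]; rw [hcompB i]
  rw [hLHS, hRHS]
  -- pointwise bounds
  have htoReal_le_one : ∀ {W : Type} [MeasurableSpace W] (m : Measure W)
      [IsProbabilityMeasure m] (s : Set W), (m s).toReal ≤ 1 := by
    intro W _ m _ s
    rw [← ENNReal.toReal_one]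
    exact ENNReal.toReal_mono ENNReal.one_ne_top prob_le_one
  have hxbound : ∀ i, |x i| ≤ lam i := by
    intro i
    rw [hxdef, abs_of_nonneg (mul_nonneg (hnn i) ENNReal.toReal_nonneg)]
    calc lam i * _ ≤ lam i * 1 := mul_le_mul_of_nonneg_left (htoReal_le_one _ _) (hnn i)
    _ = lam i := mul_one _
  have hybound : ∀ i, |y i| ≤ lam i := by
    intro i
    rw [hydef, abs_of_nonneg (mul_nonneg (hnn i) ENNReal.toReal_nonneg)]
    calc lam i * _ ≤ lam i * 1 := mul_le_mul_of_nonneg_left (htoReal_le_one _ _) (hnn i)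
    _ = lam i := mul_one _
  have hxsum : Summable x := by
    apply Summable.of_abs
    exact Summable.of_nonneg_of_le (fun i => abs_nonneg _) hxbound hsummable
  have hysum : Summable y := by
    apply Summable.of_abs
    exact Summable.of_nonneg_of_le (fun i => abs_nonneg _) hybound hsummable
  set g : ℕ → ℝ := fun i => lam i * (ε / 4) + (if i < N then 0 else lam i) with hgdef
  have htail : Summable (fun i => if i < N then (0:ℝ) else lam i) := by
    apply hsummable.of_nonneg_of_le (fun i => by split <;> simp [hnn i])
    intro i
    split <;> simp [hnn i]
  have hgsum : Summable g := (hsummable.mul_right _).add htail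
  have hdiff : ∀ i, |x i - y i| ≤ g i := by
    intro i
    by_cases hi : i < N
    · have hy : Sigma.mk i ⁻¹' B' q = B i q := by rw [hpre i q, if_pos hi]
      have hy' : Sigma.mk i ⁻¹' B' r = B i r := by rw [hpre i r, if_pos hi]
      have hest := hBest i γ hγ q r
      rw [hxdef, hydef]
      simp only [hy, hy', ← mul_sub]
      rw [abs_mul, abs_of_nonneg (hnn i)]
      rw [hgdef]
      simp only [if_pos hi, add_zero]
      exact mul_le_mul_of_nonneg_left hest.le (hnn i)
    · have hy : Sigma.mk i ⁻¹' B' q = ∅ := by rw [hpre i q, if_neg hi]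
      have hyzero : y i = 0 := by
        rw [hydef]
        simp [hy]
      rw [hyzero, sub_zero, hgdef]
      simp only [if_neg hi]
      calc |x i| ≤ lam i := hxbound i
      _ ≤ lam i * (ε / 4) + lam i :=
        le_add_of_nonneg_left (mul_nonneg (hnn i) (by positivity))
  -- sum of the bound
  have htailval : ∑' i, (if i < N then (0:ℝ) else lam i) < ε / 4 := by
    have hsplit := Summable.sum_add_tsum_nat_add N htail
    have h1 : ∑ i ∈ Finset.range N, (if i < N then (0:ℝ) else lam i) = 0 := by
      apply Finset.sum_eq_zero
      intro i hi
      rw [if_pos (Finset.mem_range.1 hi)]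
    have h2 : (fun i => if i + N < N then (0:ℝ) else lam (i + N)) = fun i => lam (i + N) := by
      funext i
      rw [if_neg (by omega)]
    rw [h1, h2, zero_add] at hsplit
    rw [← hsplit]
    exact hN
  have hgval : ∑' i, g i < ε / 2 := by
    rw [hgdef]
    rw [Summable.tsum_add (hsummable.mul_right _) htail, tsum_mul_right, hsum, one_mul]
    linarith
  calc |∑' i, x i - ∑' i, y i| = |∑' i, (x i - y i)| := by rw [Summable.tsum_sub hxsum hysum]
  _ ≤ ∑' i, |x i - y i| := by
      simpa using norm_tsum_le_tsum_norm (f := fun i => x i - y i)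
        (by simpa using ((hgsum.of_nonneg_of_le (fun i => abs_nonneg _) hdiff)))
  _ ≤ ∑' i, g i := Summable.tsum_le_tsum hdiff (hgsum.of_nonneg_of_le (fun i => abs_nonneg _) hdiff) hgsum
  _ < ε / 2 := hgval
  _ < ε := by linarith
end

section
/- Let Γ be a countable discrete group and b a measure-preserving action of Γ on a probability space (Y,ν). Then for every n,k ∈ ℕ, the closed convex hull of C_{n,k}(b) in [0,1]^{n×k×k} is contained in C_{n,k}(ι × b), where ι is the trivial action of Γ on a standard probability space and ι × b is the product action on the product probability space. -/
open MeasureTheory Filter Topology Set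

section Aux

open MPAction

lemma sierpinski_aux {W : Type*} [MeasurableSpace W] [StandardBorelSpace W]
    (ρ : Measure W) [IsFiniteMeasure ρ] [NullSingletonClass ρ] {S : Set W} (hS : MeasurableSet S)
    {r : ENNReal} (hr : r ≤ ρ S) : ∃ t, MeasurableSet t ∧ t ⊆ S ∧ ρ t = r := by
  rcases eq_or_ne r 0 with rfl | hr0
  · exact ⟨∅, MeasurableSet.empty, Set.empty_subset _, measure_empty⟩
  rcases eq_or_ne r (ρ S) with rfl | hrS
  · exact ⟨S, hS, subset_rfl, rfl⟩
  have hrlt : r < ρ S := lt_of_le_of_ne hr hrS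
  set c := ρ S with hc
  have hc0 : c ≠ 0 := fun h => hr0 (le_antisymm (h ▸ hr) zero_le)
  have hcT : c ≠ ⊤ := (measure_lt_top ρ S).ne
  obtain ⟨f, hf⟩ := MeasureTheory.exists_measurableEmbedding_real W
  set μ' : Measure ℝ := (ρ.restrict S).map f with hμ'
  have hμ'univ : μ' Set.univ = c := by
    rw [hμ', Measure.map_apply hf.measurable MeasurableSet.univ, Set.preimage_univ,
      Measure.restrict_apply_univ]
  have hμ'atoms : ∀ x : ℝ, μ' {x} = 0 := by
    intro x
    rw [hμ', Measure.map_apply hf.measurable (measurableSet_singleton x)]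
    refine Set.Subsingleton.measure_zero ?_ _
    intro a ha b hb
    exact hf.injective (ha.trans hb.symm)
  set μ'' : Measure ℝ := c⁻¹ • μ' with hμ''
  have hprob : IsProbabilityMeasure μ'' := by
    constructor
    rw [hμ'', Measure.smul_apply, smul_eq_mul, hμ'univ, ENNReal.inv_mul_cancel hc0 hcT]
  set F := ProbabilityTheory.cdf μ'' with hF
  have hmono : Monotone F := ProbabilityTheory.monotone_cdf μ''
  have hcont : Continuous F := by
    rw [continuous_iff_continuousAt]
    intro x
    rw [hmono.continuousAt_iff_leftLim_eq_rightLim]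
    have h1 : Function.rightLim F x = F x := StieltjesFunction.rightLim_eq _ x
    have h2 : F x ≤ Function.leftLim F x := by
      have hmc := ProbabilityTheory.measure_cdf (μ := μ'')
      have hsing : (ProbabilityTheory.cdf μ'').measure {x} = 0 := by
        rw [hmc, hμ'', Measure.smul_apply, hμ'atoms, smul_zero]
      rw [StieltjesFunction.measure_singleton] at hsing
      have := ENNReal.ofReal_eq_zero.mp hsing
      linarith
    have h3 : Function.leftLim F x ≤ F x := hmono.leftLim_le le_rfl
    rw [h1, le_antisymm h3 h2]
  set r' : ℝ := (r / c).toReal with hr'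
  have hdivT : r / c ≠ ⊤ := (ENNReal.div_lt_top (hrlt.trans_le le_top).ne hc0).ne
  have hr'pos : 0 < r' :=
    ENNReal.toReal_pos (by simp [ENNReal.div_eq_zero_iff, hr0, hcT]) hdivT
  have hr'lt1 : r' < 1 := by
    have h1 : r / c < 1 := by
      rw [ENNReal.div_lt_iff (Or.inl hc0) (Or.inl hcT), one_mul]
      exact hrlt
    calc r' < (1 : ENNReal).toReal := ENNReal.toReal_strict_mono (by simp) h1
    _ = 1 := by simp
  obtain ⟨a, ha⟩ := ((ProbabilityTheory.tendsto_cdf_atBot μ'').eventually_lt_const hr'pos).exists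
  obtain ⟨d, hd⟩ := ((ProbabilityTheory.tendsto_cdf_atTop μ'').eventually_const_lt hr'lt1).exists
  have hab : a ≤ d := by
    by_contra h
    exact absurd (hmono (le_of_not_ge h)) (not_le.mpr (ha.trans hd))
  have hmem : r' ∈ Set.Icc (F a) (F d) := ⟨ha.le, hd.le⟩
  obtain ⟨x, -, hx⟩ := intermediate_value_Icc hab hcont.continuousOn hmem
  have hIic : μ'' (Iic x) = r / c := by
    rw [← ProbabilityTheory.ofReal_cdf μ'' x, hx, hr', ENNReal.ofReal_toReal hdivT]
  have hμ'Iic : μ' (Iic x) = r := by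
    have hcc : c * μ'' (Iic x) = μ' (Iic x) := by
      rw [hμ'', Measure.smul_apply, smul_eq_mul, ← mul_assoc,
        ENNReal.mul_inv_cancel hc0 hcT, one_mul]
    rw [← hcc, hIic, mul_comm, ENNReal.div_mul_cancel hc0 hcT]
  refine ⟨S ∩ f ⁻¹' Iic x, hS.inter (hf.measurable measurableSet_Iic),
    Set.inter_subset_left, ?_⟩
  rw [Set.inter_comm, ← Measure.restrict_apply (hf.measurable measurableSet_Iic),
    ← Measure.map_apply hf.measurable measurableSet_Iic, ← hμ', hμ'Iic]

lemma partition_aux {W : Type*} [MeasurableSpace W] [StandardBorelSpace W]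
    (ρ : Measure W) [IsFiniteMeasure ρ] [NullSingletonClass ρ] :
    ∀ (m : ℕ) (w : Fin m → ENNReal) (S : Set W), MeasurableSet S → (∑ i, w i) ≤ ρ S →
    ∃ V : Fin m → Set W, (∀ i, MeasurableSet (V i) ∧ V i ⊆ S ∧ ρ (V i) = w i) ∧
      Pairwise (Function.onFun Disjoint V) := by
  intro m
  induction m with
  | zero =>
    intro w S hS _
    exact ⟨fun i => i.elim0, fun i => i.elim0, fun i => i.elim0⟩
  | succ m ih =>
    intro w S hS hsum
    have hw0 : w 0 ≤ ρ S := le_trans (Finset.single_le_sum (f := w) (fun _ _ => zero_le)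
      (Finset.mem_univ 0)) hsum
    obtain ⟨t, ht, htS, hρt⟩ := sierpinski_aux ρ hS hw0
    have htT : ρ t ≠ ⊤ := (measure_lt_top ρ t).ne
    have hS' : MeasurableSet (S \ t) := hS.diff ht
    have hrest : (∑ i : Fin m, w i.succ) ≤ ρ (S \ t) := by
      rw [measure_diff htS ht.nullMeasurableSet htT, hρt]
      rw [Fin.sum_univ_succ] at hsum
      exact ENNReal.le_sub_of_add_le_left (hρt ▸ htT) hsum
    obtain ⟨V', hV', hdisj'⟩ := ih (fun i => w i.succ) (S \ t) hS' hrest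
    have hd0 : ∀ j', Disjoint t (V' j') :=
      fun j' => (disjoint_sdiff_right.mono_right (hV' j').2.1).symm.symm
    refine ⟨Fin.cons t V', ?_, ?_⟩
    · intro i
      refine Fin.cases ?_ ?_ i
      · exact ⟨ht, htS, hρt⟩
      · intro j
        exact ⟨(hV' j).1, (hV' j).2.1.trans Set.diff_subset, (hV' j).2.2⟩
    · intro i j hij
      rcases Fin.eq_zero_or_eq_succ i with rfl | ⟨i', rfl⟩ <;>
        rcases Fin.eq_zero_or_eq_succ j with rfl | ⟨j', rfl⟩
      · exact absurd rfl hij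
      · simpa [Function.onFun] using hd0 j'
      · simpa [Function.onFun] using (hd0 i').symm
      · simpa [Function.onFun] using hdisj' (fun h : i' = j' => hij (by rw [h]))

/-- Exact partition of the whole space with prescribed measures summing to `1`. -/
lemma partition_exact {W : Type*} [MeasurableSpace W] [StandardBorelSpace W]
    (ρ : Measure W) [IsProbabilityMeasure ρ] [NullSingletonClass ρ]
    (m : ℕ) (w : Fin m → ENNReal) (hsum : (∑ i, w i) = 1) :
    ∃ V : Fin m → Set W, (∀ i, MeasurableSet (V i) ∧ ρ (V i) = w i) ∧
      Pairwise (Function.onFun Disjoint V) ∧ (⋃ i, V i) = Set.univ := by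
  obtain ⟨V, hV, hdisj⟩ := partition_aux ρ m w Set.univ MeasurableSet.univ
    (by rw [hsum, measure_univ])
  have hm : m ≠ 0 := by
    rintro rfl
    simp at hsum
  have : NeZero m := ⟨hm⟩
  have hUmeas : MeasurableSet (⋃ i, V i) := MeasurableSet.iUnion (fun i => (hV i).1)
  have hmeasU : ρ (⋃ i, V i) = 1 := by
    rw [measure_iUnion hdisj (fun i => (hV i).1), tsum_fintype]
    rw [Finset.sum_congr rfl (fun i _ => (hV i).2.2)]
    exact hsum
  set L : Set W := (⋃ i, V i)ᶜ with hL
  have hLmeas : MeasurableSet L := hUmeas.compl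
  have hLnull : ρ L = 0 := by
    rw [hL, measure_compl hUmeas (measure_ne_top ρ _), hmeasU, measure_univ, tsub_self]
  have hLdisj : ∀ j, Disjoint L (V j) :=
    fun j => disjoint_compl_left.mono_right (Set.subset_iUnion V j)
  refine ⟨Function.update V 0 (V 0 ∪ L), ?_, ?_, ?_⟩
  · intro i
    rcases eq_or_ne i 0 with rfl | hi
    · rw [Function.update_self]
      exact ⟨(hV 0).1.union hLmeas, by rw [measure_union (hLdisj 0).symm hLmeas, hLnull, add_zero, (hV 0).2.2]⟩
    · rw [Function.update_of_ne hi]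
      exact ⟨(hV i).1, (hV i).2.2⟩
  · intro i j hij
    unfold Function.onFun
    rcases eq_or_ne i 0 with rfl | hi
    · rw [Function.update_self, Function.update_of_ne (Ne.symm hij)]
      exact Set.disjoint_union_left.mpr ⟨hdisj hij, (hLdisj j)⟩
    · rcases eq_or_ne j 0 with rfl | hj
      · rw [Function.update_self, Function.update_of_ne hi]
        exact (Set.disjoint_union_left.mpr ⟨hdisj (Ne.symm hi), hLdisj i⟩).symm
      · rw [Function.update_of_ne hi, Function.update_of_ne hj]
        exact hdisj hij
  · apply Set.eq_univ_of_forall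
    intro x
    by_cases hx : x ∈ ⋃ i, V i
    · obtain ⟨i, hi⟩ := Set.mem_iUnion.mp hx
      rcases eq_or_ne i 0 with rfl | hne
      · exact Set.mem_iUnion.mpr ⟨0, by rw [Function.update_self]; exact Or.inl hi⟩
      · exact Set.mem_iUnion.mpr ⟨i, by rw [Function.update_of_ne hne]; exact hi⟩
    · exact Set.mem_iUnion.mpr ⟨0, by rw [Function.update_self]; exact Or.inr hx⟩

lemma MPAction.image_act_eq {Γ : Type*} [Group Γ] {X : Type*} [MeasurableSpace X]
    {μ : Measure X} (a : MPAction Γ X μ) (γ : Γ) (A : Set X) :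
    a.act γ '' A = a.act γ⁻¹ ⁻¹' A := by
  ext x
  constructor
  · rintro ⟨y, hy, rfl⟩
    have : a.act γ⁻¹ (a.act γ y) = y := by
      rw [← a.act_mul, inv_mul_cancel, a.act_one]
    rwa [Set.mem_preimage, this]
  · intro hx
    refine ⟨a.act γ⁻¹ x, hx, ?_⟩
    rw [← a.act_mul, mul_inv_cancel, a.act_one]

end Aux


lemma comb_mem
    (Γ : Type) [Group Γ]
    (Y : Type) [MeasurableSpace Y] (ν : Measure Y) [IsProbabilityMeasure ν]
    (b : MPAction Γ Y ν)
    (W : Type) [MeasurableSpace W] [StandardBorelSpace W]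
    (ρ : Measure W) [IsProbabilityMeasure ρ] [NullSingletonClass ρ]
    (k m : ℕ) (w : Fin m → ℝ) (hw0 : ∀ i, 0 ≤ w i) (hw1 : ∑ i, w i = 1)
    (A : Fin m → Fin k → Set Y) (hA : ∀ i, MPAction.IsPartition (A i)) :
    ∃ B : Fin k → Set (W × Y), MPAction.IsPartition B ∧
      ∀ (γ : Γ) (q r : Fin k),
        ((ρ.prod ν) ((MPAction.prodAction (MPAction.trivAction Γ W ρ) b).act γ '' B q ∩ B r)).toReal
          = ∑ i, w i * (ν (b.act γ '' A i q ∩ A i r)).toReal := by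
  classical
  set w' : Fin m → ENNReal := fun i => ENNReal.ofReal (w i) with hw'
  have hw'sum : (∑ i, w' i) = 1 := by
    rw [hw']
    rw [← ENNReal.ofReal_sum_of_nonneg (fun i _ => hw0 i), hw1, ENNReal.ofReal_one]
  obtain ⟨V, hV, hVdisj, hVcover⟩ := partition_exact ρ m w' hw'sum
  set B : Fin k → Set (W × Y) := fun q => ⋃ i, V i ×ˢ A i q with hB
  have hBmeas : ∀ q, MeasurableSet (B q) :=
    fun q => MeasurableSet.iUnion (fun i => ((hV i).1).prod ((hA i).1 q))
  have hkey : ∀ (γ : Γ) (q r : Fin k),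
      (MPAction.prodAction (MPAction.trivAction Γ W ρ) b).act γ '' B q ∩ B r
        = ⋃ i, V i ×ˢ (b.act γ '' A i q ∩ A i r) := by
    intro γ q r
    ext ⟨x, y⟩
    constructor
    · rintro ⟨⟨⟨x', y'⟩, hmem, heq⟩, hr⟩
      obtain ⟨hx', hy'⟩ : x' = x ∧ b.act γ y' = y := by
        have h : (x', b.act γ y') = (x, y) := heq
        exact ⟨congrArg Prod.fst h, congrArg Prod.snd h⟩
      subst hx'
      obtain ⟨i, hxi, hyi⟩ := by
        simpa only [hB, Set.mem_iUnion, Set.mem_prod] using hmem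
      obtain ⟨j, hxj, hyj⟩ := by
        simpa only [hB, Set.mem_iUnion, Set.mem_prod] using hr
      have hij : i = j := by
        by_contra hne
        exact Set.disjoint_left.mp (hVdisj hne) hxi hxj
      subst hij
      exact Set.mem_iUnion.mpr ⟨i, hxi, ⟨y', hyi, hy'⟩, hyj⟩
    · intro hmem
      obtain ⟨i, hxi, ⟨y', hy', hyeq⟩, hyr⟩ := by
        simpa only [Set.mem_iUnion, Set.mem_prod, Set.mem_inter_iff, Set.mem_image] using hmem
      refine ⟨⟨⟨x, y'⟩, ?_, ?_⟩, ?_⟩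
      · exact Set.mem_iUnion.mpr ⟨i, hxi, hy'⟩
      · show (x, b.act γ y') = (x, y)
        rw [hyeq]
      · exact Set.mem_iUnion.mpr ⟨i, hxi, hyr⟩
  refine ⟨B, ⟨hBmeas, ?_, ?_⟩, ?_⟩
  · -- pairwise disjoint
    intro q r hqr
    rw [Function.onFun, Set.disjoint_left]
    rintro ⟨x, y⟩ hxq hxr
    obtain ⟨i, hxi, hyi⟩ := by
      simpa only [hB, Set.mem_iUnion, Set.mem_prod] using hxq
    obtain ⟨j, hxj, hyj⟩ := by
      simpa only [hB, Set.mem_iUnion, Set.mem_prod] using hxr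
    have hij : i = j := by
      by_contra hne
      exact Set.disjoint_left.mp (hVdisj hne) hxi hxj
    subst hij
    exact Set.disjoint_left.mp ((hA i).2.1 hqr) hyi hyj
  · -- cover
    apply Set.eq_univ_of_forall
    rintro ⟨x, y⟩
    obtain ⟨i, hxi⟩ := Set.mem_iUnion.mp (hVcover ▸ Set.mem_univ x)
    obtain ⟨q, hyq⟩ := Set.mem_iUnion.mp ((hA i).2.2 ▸ Set.mem_univ y)
    exact Set.mem_iUnion.mpr ⟨q, Set.mem_iUnion.mpr ⟨i, hxi, hyq⟩⟩
  · -- measure identity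
    intro γ q r
    have hTmeas : ∀ i, MeasurableSet (b.act γ '' A i q ∩ A i r) := by
      intro i
      rw [MPAction.image_act_eq]
      exact ((b.measurePreserving_act γ⁻¹).measurable ((hA i).1 q)).inter ((hA i).1 r)
    rw [hkey γ q r,
      measure_iUnion (fun i j hij => Set.Disjoint.set_prod_left (hVdisj hij) _ _)
        (fun i => ((hV i).1).prod (hTmeas i)),
      tsum_fintype]
    have hterm : ∀ i, (ρ.prod ν) (V i ×ˢ (b.act γ '' A i q ∩ A i r))
        = w' i * ν (b.act γ '' A i q ∩ A i r) := by
      intro i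
      rw [Measure.prod_prod, (hV i).2]
    rw [Finset.sum_congr rfl (fun i _ => hterm i)]
    rw [ENNReal.toReal_sum (fun i _ => ENNReal.mul_ne_top ENNReal.ofReal_ne_top
      (measure_ne_top ν _))]
    refine Finset.sum_congr rfl (fun i _ => ?_)
    simp only [hw', ENNReal.toReal_mul, ENNReal.toReal_ofReal (hw0 i)]

/-- For any measure-preserving action `b` of a countable group `Γ` on a
probability space `(Y,ν)` and any `n, k`, the closed convex hull of `C_{n,k}(b)` is contained
in `C_{n,k}(ι × b)`, where `ι` is the trivial action of `Γ` on a standard probability space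
`(W,ρ)` and `ι × b` is the product action. -/
theorem closedConvexHull_Cnk_subset
    (Γ : Type) [Group Γ] [Countable Γ]
    (Y : Type) [MeasurableSpace Y] (ν : Measure Y) [IsProbabilityMeasure ν]
    (b : MPAction Γ Y ν)
    (W : Type) [MeasurableSpace W] [StandardBorelSpace W]
    (ρ : Measure W) [IsProbabilityMeasure ρ] [NullSingletonClass ρ]
    (e : ℕ → Γ) (he : Function.Surjective e)
    (n k : ℕ) :
    closure (convexHull ℝ (MPAction.Cnk e b n k)) ⊆
      MPAction.Cnk e (MPAction.prodAction (MPAction.trivAction Γ W ρ) b) n k := by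
  classical
  set bp := MPAction.prodAction (MPAction.trivAction Γ W ρ) b with hbp
  set Db : Set ((Fin n × Fin k × Fin k) → ℝ) :=
    { v | ∃ A : Fin k → Set Y, MPAction.IsPartition A ∧
      ∀ (p : Fin n) (q r : Fin k), v (p, q, r) = (ν (b.act (e p.1) '' A q ∩ A r)).toReal }
    with hDb
  set Dp : Set ((Fin n × Fin k × Fin k) → ℝ) :=
    { v | ∃ B : Fin k → Set (W × Y), MPAction.IsPartition B ∧
      ∀ (p : Fin n) (q r : Fin k),
        v (p, q, r) = ((ρ.prod ν) (bp.act (e p.1) '' B q ∩ B r)).toReal }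
    with hDp
  have hkey : convexHull ℝ Db ⊆ Dp := by
    intro v hv
    rw [convexHull_eq] at hv
    obtain ⟨ι, t, wt, zt, hwt0, hwt1, hzt, rfl⟩ := hv
    rw [Finset.centerMass_eq_of_sum_1 _ _ hwt1]
    set m := t.card with hm
    set eqv : {x // x ∈ t} ≃ Fin m := t.equivFin with heqv
    set wf : Fin m → ℝ := fun j => wt (eqv.symm j) with hwf
    set zf : Fin m → ((Fin n × Fin k × Fin k) → ℝ) := fun j => zt (eqv.symm j) with hzf
    have hsum_eq : ∑ i ∈ t, wt i • zt i = ∑ j, wf j • zf j := by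
      rw [← Finset.sum_coe_sort t (fun i => wt i • zt i)]
      exact (Equiv.sum_comp eqv.symm (fun i : {x // x ∈ t} => wt i • zt i)).symm
    rw [hsum_eq]
    have hwf0 : ∀ j, 0 ≤ wf j := fun j => hwt0 _ (eqv.symm j).2
    have hwf1 : ∑ j, wf j = 1 := by
      rw [hwf, Equiv.sum_comp eqv.symm (fun i : {x // x ∈ t} => wt i),
        Finset.sum_coe_sort t wt, hwt1]
    have hzmem : ∀ j, zf j ∈ Db := fun j => hzt _ (eqv.symm j).2
    choose A hApart hAval using hzmem
    obtain ⟨B, hBpart, hBval⟩ := comb_mem Γ Y ν b W ρ k m wf hwf0 hwf1 A hApart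
    refine ⟨B, hBpart, ?_⟩
    intro p q r
    rw [hBval (e p.1) q r]
    rw [Finset.sum_apply]
    refine Finset.sum_congr rfl (fun j _ => ?_)
    rw [Pi.smul_apply, smul_eq_mul, hAval j p q r]
  have h1 : convexHull ℝ (MPAction.Cnk e b n k) ⊆ closure (convexHull ℝ Db) := by
    refine convexHull_min ?_ ((convex_convexHull ℝ Db).closure)
    exact closure_mono (subset_convexHull ℝ Db)
  refine subset_trans (closure_mono h1) ?_
  rw [closure_closure]
  exact closure_mono hkey
end

section
/- Let Γ be a countable discrete group acting by a Borel action a on a Polish space Y, and let M_a(Y) be the space of a-invariant Borel probability measures on Y with the weak* topology. Then the map Θ sending ν ∈ M_a(Y) to the weak equivalence class of the measure-preserving action a_ν = Γ↷^a(Y,ν) is Borel, as a map from M_a(Y) to the space A*_∼(Γ) of weak equivalence classes of all measure-preserving actions of Γ on probability spaces, equipped with the metric d(a,b) = Σ_{n,k} 2^{−(n+k)} d_H(C_{n,k}(a),C_{n,k}(b)). Equivalently, for every ν_0 ∈ M_a(Y), N ∈ ℕ, and r ≥ 0, the set {ν ∈ M_a(Y) : d_H(C_{n,k}(a_{ν_0}),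 C_{n,k}(a_ν)) ≤ r for all n,k ≤ N} is Borel. -/
open MeasureTheory Filter Topology Set

/-- The set `C_{n,k}` associated to a Borel action `act` of `Γ` and an arbitrary Borel
probability measure `ν` on `Y`. -/
noncomputable def CnkRaw {Γ : Type*} [Group Γ] {Y : Type*} [MeasurableSpace Y]
    (e : ℕ → Γ) (act : Γ → Y → Y) (ν : Measure Y) (n k : ℕ) :
    Set ((Fin n × Fin k × Fin k) → ℝ) :=
  closure { v | ∃ A : Fin k → Set Y,
    ((∀ i, MeasurableSet (A i)) ∧ Pairwise (Function.onFun Disjoint A) ∧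
      (⋃ i, A i) = Set.univ) ∧
    ∀ (p : Fin n) (q r : Fin k), v (p, q, r) = (ν (act (e p.1) '' A q ∩ A r)).toReal }

set_option linter.unusedSectionVars false
set_option linter.unusedVariables false
set_option maxHeartbeats 1000000

section BorelAux
open Metric

variable {Γ : Type} [Group Γ] {Y : Type} [MeasurableSpace Y]


variable {Γ : Type} [Group Γ] {Y : Type} [MeasurableSpace Y]

lemma act_image_eq_preimage (act : Γ → Y → Y)
    (hone : ∀ y, act 1 y = y) (hmul : ∀ γ δ y, act (γ * δ) y = act γ (act δ y))
    (γ : Γ) (S : Set Y) : act γ '' S = act γ⁻¹ ⁻¹' S := by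
  ext y
  constructor
  · rintro ⟨x, hx, rfl⟩
    show act γ⁻¹ (act γ x) ∈ S
    rw [← hmul, inv_mul_cancel, hone]
    exact hx
  · intro hy
    exact ⟨act γ⁻¹ y, hy, by rw [← hmul, mul_inv_cancel, hone]⟩

lemma abs_toReal_measure_sub_le (ν : Measure Y) [IsFiniteMeasure ν] (U V : Set Y) :
    |(ν U).toReal - (ν V).toReal| ≤ (ν (symmDiff U V)).toReal := by
  have key : ∀ S T : Set Y, (ν S).toReal - (ν T).toReal ≤ (ν (symmDiff S T)).toReal := by
    intro S T
    have hsub : S ⊆ T ∪ symmDiff S T := by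
      intro x hx
      by_cases h : x ∈ T
      · exact Or.inl h
      · exact Or.inr (Set.mem_symmDiff.2 (Or.inl ⟨hx, h⟩))
    have h1 : ν S ≤ ν T + ν (symmDiff S T) :=
      (measure_mono hsub).trans (measure_union_le _ _)
    have h2 : (ν S).toReal ≤ (ν T).toReal + (ν (symmDiff S T)).toReal := by
      rw [← ENNReal.toReal_add (measure_ne_top _ _) (measure_ne_top _ _)]
      exact ENNReal.toReal_mono (by finiteness) h1
    linarith
  rw [abs_sub_le_iff]
  refine ⟨key U V, ?_⟩
  have := key V U
  rwa [symmDiff_comm V U] at this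

lemma inter_symmDiff_inter_subset' (U U' T T' : Set Y) :
    symmDiff (U ∩ T) (U' ∩ T') ⊆ symmDiff U U' ∪ symmDiff T T' := by
  intro x hx
  simp only [Set.mem_symmDiff, Set.mem_inter_iff, Set.mem_union] at *
  tauto



lemma partition_disjointify {Y : Type} {k : ℕ} {𝒜 : Set (Set Y)}
    (h𝒜 : MeasureTheory.IsSetAlgebra 𝒜)
    (A : Fin (k+1) → Set Y) (hdisj : Pairwise (Function.onFun Disjoint A))
    (hcov : (⋃ i, A i) = Set.univ)
    (E' : Fin (k+1) → Set Y) (hE' : ∀ i, E' i ∈ 𝒜) :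
    ∃ E : Fin (k+1) → Set Y, (∀ i, E i ∈ 𝒜) ∧ Pairwise (Function.onFun Disjoint E) ∧
      (⋃ i, E i) = Set.univ ∧
      ∀ i, symmDiff (A i) (E i) ⊆ ⋃ j, symmDiff (A j) (E' j) := by
  classical
  set B : Fin (k+1) → Set Y := fun i => ⋃ j ∈ Finset.Iio i, E' j with hB
  set E : Fin (k+1) → Set Y := fun i =>
    (E' i \ B i) ∪ (if i = 0 then (⋃ j, E' j)ᶜ else ∅) with hEdef
  have hBmem : ∀ i, B i ∈ 𝒜 := fun i => h𝒜.biUnion_mem _ (fun j _ => hE' j)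
  have hUmem : (⋃ j, E' j) ∈ 𝒜 := by
    have h : (⋃ j, E' j) = ⋃ j ∈ (Finset.univ : Finset (Fin (k+1))), E' j := by simp
    rw [h]; exact h𝒜.biUnion_mem _ (fun j _ => hE' j)
  have hlt : ∀ i i' : Fin (k+1), i < i' → Disjoint (E i) (E i') := by
    intro i i' h
    rw [Set.disjoint_left]
    intro x hxi hxi'
    have hi'0 : i' ≠ 0 := by
      intro h0
      rw [h0] at h
      exact absurd h (by simp [Fin.not_lt, Fin.zero_le])
    have hxE' : x ∈ E' i' ∧ x ∉ B i' := by
      simp only [hEdef, if_neg hi'0, Set.union_empty, Set.mem_diff] at hxi'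
      exact hxi'
    have hnotEi : x ∉ E' i := fun hmem =>
      hxE'.2 (Set.mem_biUnion (Finset.mem_Iio.2 h) hmem)
    rcases hxi with (⟨hx1, -⟩ | hx2)
    · exact hnotEi hx1
    · by_cases h0 : i = 0
      · rw [if_pos h0] at hx2
        exact hx2 (Set.mem_iUnion.2 ⟨i', hxE'.1⟩)
      · rw [if_neg h0] at hx2
        exact hx2
  refine ⟨E, ?_, ?_, ?_, ?_⟩
  · intro i
    by_cases h0 : i = 0
    · rw [hEdef]
      simp only [h0, if_pos]
      exact h𝒜.union_mem (h𝒜.diff_mem (hE' 0) (hBmem 0)) (h𝒜.compl_mem hUmem)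
    · rw [hEdef]
      simp only [if_neg h0, Set.union_empty]
      exact h𝒜.diff_mem (hE' i) (hBmem i)
  · intro i j hne
    rcases hne.lt_or_gt with h | h
    · exact hlt i j h
    · exact (hlt j i h).symm
  · rw [Set.eq_univ_iff_forall]
    intro x
    by_cases hx : x ∈ ⋃ j, E' j
    · obtain ⟨j, hj⟩ := Set.mem_iUnion.1 hx
      set s : Finset (Fin (k+1)) := Finset.univ.filter (fun j => x ∈ E' j) with hs
      have hsne : s.Nonempty := ⟨j, by simp [hs, hj]⟩
      set i₀ := s.min' hsne with hi₀def
      have hi₀ : x ∈ E' i₀ := by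
        have := s.min'_mem hsne
        simp only [hs, Finset.mem_filter] at this
        exact this.2
      have hmin : ∀ j', j' < i₀ → x ∉ E' j' := by
        intro j' hj' hmem
        exact absurd (s.min'_le j' (by simp [hs, hmem])) (not_le.2 hj')
      refine Set.mem_iUnion.2 ⟨i₀, Set.mem_union_left _ ⟨hi₀, ?_⟩⟩
      intro hmem
      obtain ⟨j', hj'⟩ := Set.mem_iUnion.1 hmem
      obtain ⟨hltj, hxj⟩ := Set.mem_iUnion.1 hj'
      exact hmin j' (Finset.mem_Iio.1 hltj) hxj
    · exact Set.mem_iUnion.2 ⟨0, Set.mem_union_right _ (by rw [if_pos rfl]; exact hx)⟩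
  · intro i x hx
    rw [Set.mem_symmDiff] at hx
    rcases hx with ⟨hxA, hxE⟩ | ⟨hxE, hxA⟩
    · by_cases hE'i : x ∈ E' i
      · have hxB : x ∈ B i := by
          by_contra hB'
          exact hxE (Set.mem_union_left _ ⟨hE'i, hB'⟩)
        obtain ⟨j', hj'⟩ := Set.mem_iUnion.1 hxB
        obtain ⟨hltj, hxj⟩ := Set.mem_iUnion.1 hj'
        have hne : j' ≠ i := ne_of_lt (Finset.mem_Iio.1 hltj)
        have hnA : x ∉ A j' := fun h => Set.disjoint_left.1 (hdisj hne) h hxA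
        exact Set.mem_iUnion.2 ⟨j', Set.mem_symmDiff.2 (Or.inr ⟨hxj, hnA⟩)⟩
      · exact Set.mem_iUnion.2 ⟨i, Set.mem_symmDiff.2 (Or.inl ⟨hxA, hE'i⟩)⟩
    · rcases hxE with ⟨hE'i, -⟩ | hcompl
      · exact Set.mem_iUnion.2 ⟨i, Set.mem_symmDiff.2 (Or.inr ⟨hE'i, hxA⟩)⟩
      · by_cases h0 : i = 0
        · rw [if_pos h0] at hcompl
          have : x ∈ ⋃ j, A j := hcov ▸ Set.mem_univ x
          obtain ⟨j, hj⟩ := Set.mem_iUnion.1 this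
          refine Set.mem_iUnion.2 ⟨j, Set.mem_symmDiff.2 (Or.inl ⟨hj, fun h => ?_⟩)⟩
          exact hcompl (Set.mem_iUnion.2 ⟨j, h⟩)
        · rw [if_neg h0] at hcompl
          exact absurd hcompl (Set.notMem_empty x)


variable {Γ : Type} [Group Γ] {Y : Type} [MeasurableSpace Y]

/-- the matrix point associated to a tuple of sets -/
noncomputable def vecOfSets (e : ℕ → Γ) (act : Γ → Y → Y) (ν : Measure Y) (n k : ℕ)
    (A : Fin k → Set Y) : (Fin n × Fin k × Fin k) → ℝ :=
  fun x => (ν (act (e (x.1 : ℕ)) '' A x.2.1 ∩ A x.2.2)).toReal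

/-- partitions with pieces in `𝒜` -/
def PartsIn (𝒜 : Set (Set Y)) (k : ℕ) : Set (Fin k → Set Y) :=
  {A | (∀ i, A i ∈ 𝒜) ∧ Pairwise (Function.onFun Disjoint A) ∧ (⋃ i, A i) = Set.univ}

lemma PartsIn_countable {𝒜 : Set (Set Y)} (h : 𝒜.Countable) (k : ℕ) :
    (PartsIn 𝒜 k).Countable := by
  have : PartsIn 𝒜 k ⊆ {A : Fin k → Set Y | ∀ i, A i ∈ 𝒜} := fun A hA => hA.1
  exact (Set.countable_pi (fun _ => h)).mono this

lemma dense_parts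
    (act : Γ → Y → Y) (hmeas : ∀ γ, Measurable (act γ))
    (hone : ∀ y, act 1 y = y) (hmul : ∀ γ δ y, act (γ * δ) y = act γ (act δ y))
    {𝒜 : Set (Set Y)} (h𝒜 : MeasureTheory.IsSetAlgebra 𝒜)
    (hgen : ‹MeasurableSpace Y› = MeasurableSpace.generateFrom 𝒜)
    (ν : Measure Y) [IsProbabilityMeasure ν] (hinv : ∀ γ, ν.map (act γ) = ν)
    (e : ℕ → Γ) (n k : ℕ) (A : Fin k → Set Y)
    (hAm : ∀ i, MeasurableSet (A i)) (hAd : Pairwise (Function.onFun Disjoint A))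
    (hAc : (⋃ i, A i) = Set.univ)
    {ε : ℝ} (hε : 0 < ε) :
    ∃ E ∈ PartsIn 𝒜 k, dist (vecOfSets e act ν n k A) (vecOfSets e act ν n k E) < ε := by
  have h𝒜meas : ∀ S ∈ 𝒜, MeasurableSet S := fun S hS =>
    hgen ▸ MeasurableSpace.measurableSet_generateFrom hS
  have hMD : ν.MeasureDense 𝒜 :=
    Measure.MeasureDense.of_generateFrom_isSetAlgebra_finite ν h𝒜 hgen
  match k with
  | 0 =>
    refine ⟨A, ⟨fun i => i.elim0, hAd, hAc⟩, ?_⟩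
    simpa using hε
  | m + 1 =>
    set δ : ℝ := ε / (2 * ((m:ℝ) + 1) + 1) with hδdef
    have hδ : 0 < δ := by positivity
    have happrox : ∀ i : Fin (m+1), ∃ t ∈ 𝒜, ν (symmDiff (A i) t) < ENNReal.ofReal δ :=
      fun i => hMD.approx (A i) (hAm i) (measure_ne_top ν _) δ hδ
    choose E' hE'mem hE'close using happrox
    obtain ⟨E, hEmem, hEdisj, hEcov, hEsd⟩ :=
      partition_disjointify h𝒜 A hAd hAc E' hE'mem
    refine ⟨E, ⟨hEmem, hEdisj, hEcov⟩, ?_⟩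
    rw [dist_pi_lt_iff hε]
    intro x
    obtain ⟨p, q, r⟩ := x
    set γ : Γ := e (p : ℕ) with hγ
    -- coordinate values
    have himg : ∀ (S : Set Y), act γ '' S = act γ⁻¹ ⁻¹' S :=
      act_image_eq_preimage act hone hmul γ
    -- bound on each symmDiff
    have hsd_bound : ∀ i : Fin (m+1),
        (ν (symmDiff (A i) (E i))).toReal < ((m:ℝ) + 1) * δ := by
      intro i
      have h1 : ν (symmDiff (A i) (E i)) ≤ ∑ j : Fin (m+1), ν (symmDiff (A j) (E' j)) :=
        (measure_mono (hEsd i)).trans (measure_iUnion_fintype_le _ _)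
      have h2 : (ν (symmDiff (A i) (E i))).toReal
          ≤ ∑ j : Fin (m+1), (ν (symmDiff (A j) (E' j))).toReal := by
        rw [← ENNReal.toReal_sum (fun j _ => measure_ne_top _ _)]
        exact ENNReal.toReal_mono (by
          rw [← lt_top_iff_ne_top]
          exact (ENNReal.sum_lt_top).2 fun j _ => measure_lt_top _ _) h1
      have h3 : ∑ j : Fin (m+1), (ν (symmDiff (A j) (E' j))).toReal
          < ∑ _j : Fin (m+1), δ := by
        apply Finset.sum_lt_sum_of_nonempty (by simp)
        intro j _
        exact (ENNReal.lt_ofReal_iff_toReal_lt (measure_ne_top _ _)).1 (hE'close j)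
      have h4 : ∑ _j : Fin (m+1), δ = ((m:ℝ) + 1) * δ := by
        simp only [Finset.sum_const, nsmul_eq_mul, Finset.card_univ, Fintype.card_fin]
        push_cast
        ring
      linarith
    -- measure invariance under preimage
    have hinv' : ∀ (S : Set Y), MeasurableSet S → ν (act γ⁻¹ ⁻¹' S) = ν S := by
      intro S hS
      conv_rhs => rw [← hinv γ⁻¹]
      rw [Measure.map_apply (hmeas γ⁻¹) hS]
    have hEq_meas : ∀ i, MeasurableSet (E i) := fun i => h𝒜meas _ (hEmem i)
    -- main coordinate estimate
    have key : |(ν (act γ '' A q ∩ A r)).toReal - (ν (act γ '' E q ∩ E r)).toReal|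
        ≤ (ν (symmDiff (A q) (E q))).toReal + (ν (symmDiff (A r) (E r))).toReal := by
      have habs := abs_toReal_measure_sub_le ν (act γ '' A q ∩ A r) (act γ '' E q ∩ E r)
      have hsub : symmDiff (act γ '' A q ∩ A r) (act γ '' E q ∩ E r)
          ⊆ (act γ⁻¹ ⁻¹' symmDiff (A q) (E q)) ∪ symmDiff (A r) (E r) := by
        rw [himg, himg, Set.preimage_symmDiff]
        exact inter_symmDiff_inter_subset' _ _ _ _
      have hm1 : ν (symmDiff (act γ '' A q ∩ A r) (act γ '' E q ∩ E r))
          ≤ ν (symmDiff (A q) (E q)) + ν (symmDiff (A r) (E r)) := by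
        refine (measure_mono hsub).trans ?_
        refine (measure_union_le _ _).trans ?_
        rw [hinv' _ ((hAm q).symmDiff (hEq_meas q))]
      have hm2 : (ν (symmDiff (act γ '' A q ∩ A r) (act γ '' E q ∩ E r))).toReal
          ≤ (ν (symmDiff (A q) (E q))).toReal + (ν (symmDiff (A r) (E r))).toReal := by
        rw [← ENNReal.toReal_add (measure_ne_top _ _) (measure_ne_top _ _)]
        exact ENNReal.toReal_mono (by finiteness) hm1
      exact habs.trans hm2
    have hfinal : (ν (symmDiff (A q) (E q))).toReal + (ν (symmDiff (A r) (E r))).toReal < ε := by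
      have hq := hsd_bound q
      have hrr := hsd_bound r
      have : 2 * ((m:ℝ) + 1) * δ < ε := by
        have hc : (0:ℝ) < 2 * ((m:ℝ) + 1) + 1 := by positivity
        rw [hδdef]
        rw [show 2 * ((m:ℝ) + 1) * (ε / (2 * ((m:ℝ) + 1) + 1))
            = (2 * ((m:ℝ) + 1) * ε) / (2 * ((m:ℝ) + 1) + 1) by ring]
        rw [div_lt_iff₀ hc]
        nlinarith
      linarith
    calc dist (vecOfSets e act ν n (m+1) A (p, q, r)) (vecOfSets e act ν n (m+1) E (p, q, r))
        = |(ν (act γ '' A q ∩ A r)).toReal - (ν (act γ '' E q ∩ E r)).toReal| := by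
          rw [Real.dist_eq]; rfl
      _ ≤ _ := key
      _ < ε := hfinal

lemma cnkRaw_eq_closure
    (act : Γ → Y → Y) (hmeas : ∀ γ, Measurable (act γ))
    (hone : ∀ y, act 1 y = y) (hmul : ∀ γ δ y, act (γ * δ) y = act γ (act δ y))
    {𝒜 : Set (Set Y)} (h𝒜 : MeasureTheory.IsSetAlgebra 𝒜)
    (hgen : ‹MeasurableSpace Y› = MeasurableSpace.generateFrom 𝒜)
    (ν : Measure Y) [IsProbabilityMeasure ν] (hinv : ∀ γ, ν.map (act γ) = ν)
    (e : ℕ → Γ) (n k : ℕ) :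
    CnkRaw e act ν n k = closure (vecOfSets e act ν n k '' PartsIn 𝒜 k) := by
  have h𝒜meas : ∀ S ∈ 𝒜, MeasurableSet S := fun S hS =>
    hgen ▸ MeasurableSpace.measurableSet_generateFrom hS
  apply Set.Subset.antisymm
  · apply closure_minimal ?_ isClosed_closure
    rintro v ⟨A, ⟨hAm, hAd, hAc⟩, hv⟩
    have hveq : v = vecOfSets e act ν n k A := by
      funext x
      exact hv x.1 x.2.1 x.2.2
    rw [hveq, Metric.mem_closure_iff]
    intro ε hε
    obtain ⟨E, hE, hdist⟩ :=
      dense_parts act hmeas hone hmul h𝒜 hgen ν hinv e n k A hAm hAd hAc hε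
    exact ⟨_, Set.mem_image_of_mem _ hE, hdist⟩
  · apply closure_mono
    rintro v ⟨E, hE, rfl⟩
    exact ⟨E, ⟨fun i => h𝒜meas _ (hE.1 i), hE.2.1, hE.2.2⟩, fun p q r => rfl⟩

lemma cnkRaw_subset_closedBall (e : ℕ → Γ) (act : Γ → Y → Y)
    (ρ : Measure Y) [IsProbabilityMeasure ρ] (n k : ℕ) :
    CnkRaw e act ρ n k ⊆ Metric.closedBall 0 1 := by
  apply closure_minimal ?_ Metric.isClosed_closedBall
  rintro v ⟨A, hA, hv⟩
  rw [Metric.mem_closedBall, dist_pi_le_iff zero_le_one]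
  intro x
  rw [show v x = (ρ (act (e (x.1 : ℕ)) '' A x.2.1 ∩ A x.2.2)).toReal from hv x.1 x.2.1 x.2.2]
  rw [Pi.zero_apply, Real.dist_eq, sub_zero, abs_of_nonneg ENNReal.toReal_nonneg]
  calc (ρ (act (e (x.1 : ℕ)) '' A x.2.1 ∩ A x.2.2)).toReal
      ≤ (1 : ENNReal).toReal := ENNReal.toReal_mono ENNReal.one_ne_top prob_le_one
    _ = 1 := ENNReal.toReal_one

end BorelAux

/-- Let `Γ` be a countable group acting by a Borel action `act` on a Polish
space `Y` and let `M_a(Y)` be the space of invariant Borel probability measures on `Y`.  Then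
the map `ν ↦ [a_ν]` from `M_a(Y)` to the space of weak equivalence classes (with the metric
`d`) is Borel; equivalently, for every `ν₀ ∈ M_a(Y)`, `N ∈ ℕ` and `r ≥ 0`, the set
`{ν ∈ M_a(Y) : d_H(C_{n,k}(a_{ν₀}), C_{n,k}(a_ν)) ≤ r for all n,k ≤ N}` is Borel in
`M_a(Y)`. -/
theorem weak_class_map_is_borel
    (Γ : Type) [Group Γ] [Countable Γ]
    (Y : Type) [TopologicalSpace Y] [PolishSpace Y] [MeasurableSpace Y] [BorelSpace Y]
    (act : Γ → Y → Y)
    (hmeas : ∀ γ, Measurable (act γ))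
    (hone : ∀ y, act 1 y = y)
    (hmul : ∀ γ δ y, act (γ * δ) y = act γ (act δ y))
    (e : ℕ → Γ) (he : Function.Surjective e)
    (ν₀ : {m : Measure Y // IsProbabilityMeasure m ∧ ∀ γ, m.map (act γ) = m})
    (N : ℕ) (r : ℝ) (hr : 0 ≤ r) :
    MeasurableSet {ν : {m : Measure Y // IsProbabilityMeasure m ∧ ∀ γ, m.map (act γ) = m} |
      ∀ n ≤ N, ∀ k ≤ N,
        Metric.hausdorffDist (CnkRaw e act (ν₀ : Measure Y) n k)
          (CnkRaw e act (ν : Measure Y) n k) ≤ r} := by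
  classical
  haveI hP0 : IsProbabilityMeasure (ν₀ : Measure Y) := ν₀.2.1
  have hYne : Nonempty Y := by
    by_contra h
    rw [not_nonempty_iff] at h
    have h1 : (ν₀ : Measure Y) Set.univ = 1 := measure_univ
    rw [Set.univ_eq_empty_iff.2 h, measure_empty] at h1
    exact zero_ne_one h1
  set 𝒜 : Set (Set Y) :=
    MeasureTheory.generateSetAlgebra (TopologicalSpace.countableBasis Y) with h𝒜def
  have h𝒜 : MeasureTheory.IsSetAlgebra 𝒜 := MeasureTheory.isSetAlgebra_generateSetAlgebra
  have h𝒜count : 𝒜.Countable :=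
    MeasureTheory.countable_generateSetAlgebra (TopologicalSpace.countable_countableBasis Y)
  have hgen : ‹MeasurableSpace Y› = MeasurableSpace.generateFrom 𝒜 := by
    rw [h𝒜def, MeasureTheory.generateFrom_generateSetAlgebra_eq,
      ← (TopologicalSpace.isBasis_countableBasis Y).borel_eq_generateFrom]
    exact BorelSpace.measurable_eq
  have h𝒜meas : ∀ S ∈ 𝒜, MeasurableSet S := fun S hS =>
    hgen ▸ MeasurableSpace.measurableSet_generateFrom hS
  have hset : {ν : {m : Measure Y // IsProbabilityMeasure m ∧ ∀ γ, m.map (act γ) = m} |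
      ∀ n ≤ N, ∀ k ≤ N,
        Metric.hausdorffDist (CnkRaw e act (ν₀ : Measure Y) n k)
          (CnkRaw e act (ν : Measure Y) n k) ≤ r}
      = ⋂ n ∈ Set.Iic N, ⋂ k ∈ Set.Iic N,
        {ν : {m : Measure Y // IsProbabilityMeasure m ∧ ∀ γ, m.map (act γ) = m} |
          Metric.hausdorffDist (CnkRaw e act (ν₀ : Measure Y) n k)
            (CnkRaw e act (ν : Measure Y) n k) ≤ r} := by
    ext ν
    simp [Set.mem_iInter, Set.mem_Iic]
  rw [hset]
  refine MeasurableSet.biInter (Set.to_countable _) fun n _ => ?_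
  refine MeasurableSet.biInter (Set.to_countable _) fun k _ => ?_
  cases k with
  | zero =>
    have hempty : ∀ ρ : Measure Y, CnkRaw e act ρ n 0 = (∅ : Set _) := by
      intro ρ
      have hbase : { v : (Fin n × Fin 0 × Fin 0) → ℝ | ∃ A : Fin 0 → Set Y,
          ((∀ i, MeasurableSet (A i)) ∧ Pairwise (Function.onFun Disjoint A) ∧
            (⋃ i, A i) = Set.univ) ∧
          ∀ (p : Fin n) (q r : Fin 0), v (p, q, r) = (ρ (act (e p.1) '' A q ∩ A r)).toReal }
          = ∅ := by
        rw [Set.eq_empty_iff_forall_notMem]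
        rintro v ⟨A, ⟨-, -, hAc⟩, -⟩
        have hy := Set.mem_univ hYne.some
        rw [← hAc] at hy
        simp at hy
      show closure _ = _
      rw [hbase, closure_empty]
    have huniv : {ν : {m : Measure Y // IsProbabilityMeasure m ∧ ∀ γ, m.map (act γ) = m} |
        Metric.hausdorffDist (CnkRaw e act (ν₀ : Measure Y) n 0)
          (CnkRaw e act (ν : Measure Y) n 0) ≤ r} = Set.univ := by
      rw [Set.eq_univ_iff_forall]
      intro ν
      simp only [Set.mem_setOf_eq, hempty]
      simpa using hr
    rw [huniv]
    exact MeasurableSet.univ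
  | succ m =>
    set Etriv : Fin (m+1) → Set Y := fun i => if i = 0 then Set.univ else ∅ with hEtrivdef
    have hEtrivmem : Etriv ∈ PartsIn 𝒜 (m+1) := by
      refine ⟨?_, ?_, ?_⟩
      · intro i
        by_cases h0 : i = 0
        · rw [hEtrivdef]; simp only [h0, if_pos]; exact h𝒜.univ_mem
        · rw [hEtrivdef]; simp only [if_neg h0]; exact h𝒜.empty_mem
      · intro i j hne
        simp only [Function.onFun, hEtrivdef]
        rcases eq_or_ne j 0 with rfl | hj
        · rw [if_neg hne]
          exact Set.empty_disjoint _
        · rw [if_neg hj]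
          exact Set.disjoint_empty _
      · rw [Set.eq_univ_iff_forall]
        intro y
        exact Set.mem_iUnion.2 ⟨0, by simp [hEtrivdef]⟩
    set C₀ := CnkRaw e act (ν₀ : Measure Y) n (m+1) with hC₀def
    have hC₀eq : C₀ = closure (vecOfSets e act (ν₀ : Measure Y) n (m+1) '' PartsIn 𝒜 (m+1)) :=
      cnkRaw_eq_closure act hmeas hone hmul h𝒜 hgen _ ν₀.2.2 e n (m+1)
    have hC₀ne : C₀.Nonempty :=
      ⟨_, hC₀eq ▸ subset_closure (Set.mem_image_of_mem _ hEtrivmem)⟩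
    have hC₀bdd : Bornology.IsBounded C₀ :=
      Metric.isBounded_closedBall.subset (cnkRaw_subset_closedBall e act _ n (m+1))
    have hEq : {ν : {m' : Measure Y // IsProbabilityMeasure m' ∧ ∀ γ, m'.map (act γ) = m'} |
        Metric.hausdorffDist (CnkRaw e act (ν₀ : Measure Y) n (m+1))
          (CnkRaw e act (ν : Measure Y) n (m+1)) ≤ r}
        = {ν : {m' : Measure Y // IsProbabilityMeasure m' ∧ ∀ γ, m'.map (act γ) = m'} |
            ∀ E ∈ PartsIn 𝒜 (m+1),
              Metric.infDist (vecOfSets e act (ν : Measure Y) n (m+1) E) C₀ ≤ r} ∩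
          {ν | ∀ E₀ ∈ PartsIn 𝒜 (m+1), ∀ j : ℕ, ∃ E ∈ PartsIn 𝒜 (m+1),
            dist (vecOfSets e act (ν₀ : Measure Y) n (m+1) E₀)
              (vecOfSets e act (ν : Measure Y) n (m+1) E) < r + 1 / (j + 1)} := by
      ext ν
      haveI : IsProbabilityMeasure (ν : Measure Y) := ν.2.1
      set D := vecOfSets e act (ν : Measure Y) n (m+1) '' PartsIn 𝒜 (m+1) with hDdef
      have hCeq : CnkRaw e act (ν : Measure Y) n (m+1) = closure D :=
        cnkRaw_eq_closure act hmeas hone hmul h𝒜 hgen _ ν.2.2 e n (m+1)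
      have hDne : D.Nonempty := ⟨_, Set.mem_image_of_mem _ hEtrivmem⟩
      have hCne : (CnkRaw e act (ν : Measure Y) n (m+1)).Nonempty :=
        ⟨_, hCeq ▸ subset_closure (Set.mem_image_of_mem _ hEtrivmem)⟩
      have hCbdd : Bornology.IsBounded (CnkRaw e act (ν : Measure Y) n (m+1)) :=
        Metric.isBounded_closedBall.subset (cnkRaw_subset_closedBall e act _ n (m+1))
      simp only [Set.mem_setOf_eq, Set.mem_inter_iff]
      constructor
      · intro hd
        have hfin : EMetric.hausdorffEdist C₀ (CnkRaw e act (ν : Measure Y) n (m+1)) ≠ ⊤ :=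
          Metric.hausdorffEdist_ne_top_of_nonempty_of_bounded hC₀ne hCne hC₀bdd hCbdd
        constructor
        · intro E hE
          have hmem : vecOfSets e act (ν : Measure Y) n (m+1) E
              ∈ CnkRaw e act (ν : Measure Y) n (m+1) :=
            hCeq ▸ subset_closure (Set.mem_image_of_mem _ hE)
          have h1 := Metric.infDist_le_hausdorffDist_of_mem hmem
            (by rw [Metric.hausdorffEDist_comm]; exact hfin)
          rw [Metric.hausdorffDist_comm] at h1
          exact h1.trans hd
        · intro E₀ hE₀ j
          have hx : vecOfSets e act (ν₀ : Measure Y) n (m+1) E₀ ∈ C₀ :=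
            hC₀eq ▸ subset_closure (Set.mem_image_of_mem _ hE₀)
          have h1 : Metric.infDist (vecOfSets e act (ν₀ : Measure Y) n (m+1) E₀)
              (CnkRaw e act (ν : Measure Y) n (m+1)) ≤ r :=
            (Metric.infDist_le_hausdorffDist_of_mem hx hfin).trans hd
          rw [hCeq, Metric.infDist_closure] at h1
          have h3 : Metric.infDist (vecOfSets e act (ν₀ : Measure Y) n (m+1) E₀) D
              < r + 1 / (j + 1) := lt_of_le_of_lt h1 (lt_add_of_pos_right r (by positivity))
          obtain ⟨y, hyD, hy⟩ := (Metric.infDist_lt_iff hDne).1 h3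
          obtain ⟨E, hE, rfl⟩ := hyD
          exact ⟨E, hE, hy⟩
      · rintro ⟨h1, h2⟩
        apply Metric.hausdorffDist_le_of_infDist hr
        · rw [← hC₀def, hC₀eq]
          have hclosed : IsClosed {x : (Fin n × Fin (m+1) × Fin (m+1)) → ℝ |
              Metric.infDist x (CnkRaw e act (ν : Measure Y) n (m+1)) ≤ r} :=
            isClosed_le (Metric.continuous_infDist_pt _) continuous_const
          intro x hx
          refine closure_minimal ?_ hclosed hx
          rintro y ⟨E₀, hE₀, rfl⟩
          show Metric.infDist _ (CnkRaw e act (ν : Measure Y) n (m+1)) ≤ r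
          rw [hCeq, Metric.infDist_closure]
          by_contra hgt
          push_neg at hgt
          obtain ⟨j, hj⟩ := exists_nat_one_div_lt
            (show (0:ℝ) < Metric.infDist (vecOfSets e act (ν₀ : Measure Y) n (m+1) E₀) D - r by
              linarith)
          obtain ⟨E, hE, hdist⟩ := h2 E₀ hE₀ j
          have hle : Metric.infDist (vecOfSets e act (ν₀ : Measure Y) n (m+1) E₀) D
              ≤ dist (vecOfSets e act (ν₀ : Measure Y) n (m+1) E₀)
                (vecOfSets e act (ν : Measure Y) n (m+1) E) :=
            Metric.infDist_le_dist_of_mem (Set.mem_image_of_mem _ hE)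
          linarith
        · rw [hCeq]
          have hclosed : IsClosed {y : (Fin n × Fin (m+1) × Fin (m+1)) → ℝ |
              Metric.infDist y C₀ ≤ r} :=
            isClosed_le (Metric.continuous_infDist_pt _) continuous_const
          intro y hy
          refine closure_minimal ?_ hclosed hy
          rintro z ⟨E, hE, rfl⟩
          exact h1 E hE
    rw [hEq]
    have hvecmeas : ∀ E ∈ PartsIn 𝒜 (m+1),
        Measurable fun ν : {m' : Measure Y // IsProbabilityMeasure m' ∧
            ∀ γ, m'.map (act γ) = m'} => vecOfSets e act (ν : Measure Y) n (m+1) E := by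
      intro E hE
      apply measurable_pi_lambda
      intro x
      have hsetm : MeasurableSet (act (e (x.1 : ℕ)) '' E x.2.1 ∩ E x.2.2) := by
        rw [act_image_eq_preimage act hone hmul]
        exact ((hmeas _) (h𝒜meas _ (hE.1 x.2.1))).inter (h𝒜meas _ (hE.1 x.2.2))
      exact ((Measure.measurable_coe hsetm).comp measurable_subtype_coe).ennreal_toReal
    apply MeasurableSet.inter
    · have hrw : {ν : {m' : Measure Y // IsProbabilityMeasure m' ∧
          ∀ γ, m'.map (act γ) = m'} | ∀ E ∈ PartsIn 𝒜 (m+1),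
            Metric.infDist (vecOfSets e act (ν : Measure Y) n (m+1) E) C₀ ≤ r}
          = ⋂ E ∈ PartsIn 𝒜 (m+1),
            {ν : {m' : Measure Y // IsProbabilityMeasure m' ∧ ∀ γ, m'.map (act γ) = m'} |
              Metric.infDist (vecOfSets e act (ν : Measure Y) n (m+1) E) C₀ ≤ r} := by
        ext ν
        simp [Set.mem_iInter]
      rw [hrw]
      refine MeasurableSet.biInter (PartsIn_countable h𝒜count _) fun E hE => ?_
      exact measurableSet_le
        ((Metric.continuous_infDist_pt C₀).measurable.comp (hvecmeas E hE)) measurable_const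
    · have hrw : {ν : {m' : Measure Y // IsProbabilityMeasure m' ∧
          ∀ γ, m'.map (act γ) = m'} | ∀ E₀ ∈ PartsIn 𝒜 (m+1), ∀ j : ℕ,
            ∃ E ∈ PartsIn 𝒜 (m+1),
              dist (vecOfSets e act (ν₀ : Measure Y) n (m+1) E₀)
                (vecOfSets e act (ν : Measure Y) n (m+1) E) < r + 1 / (j + 1)}
          = ⋂ E₀ ∈ PartsIn 𝒜 (m+1), ⋂ j : ℕ, ⋃ E ∈ PartsIn 𝒜 (m+1),
            {ν : {m' : Measure Y // IsProbabilityMeasure m' ∧ ∀ γ, m'.map (act γ) = m'} |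
              dist (vecOfSets e act (ν₀ : Measure Y) n (m+1) E₀)
                (vecOfSets e act (ν : Measure Y) n (m+1) E) < r + 1 / (j + 1)} := by
        ext ν
        simp [Set.mem_iInter, Set.mem_iUnion]
      rw [hrw]
      refine MeasurableSet.biInter (PartsIn_countable h𝒜count _) fun E₀ hE₀ => ?_
      refine MeasurableSet.iInter fun j => ?_
      refine MeasurableSet.biUnion (PartsIn_countable h𝒜count _) fun E hE => ?_
      exact measurableSet_lt
        ((continuous_const.dist continuous_id).measurable.comp (hvecmeas E hE)) measurable_const
end
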